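/- arXiv:1605.07936 — 9 statements merged into one kernel-verified Lean document; each statement's English description precedes it below -/
import Mathlib

section
/- Let f be of product type with s_n(f) := Σ_{k>n} sup{|f_k(a)−f_k(b)| : a,b ∈ A}. For any m, k ∈ ℕ and points x, y ∈ A^ℕ agreeing in the first m+k coordinates, |S_m(f)(x) − S_m(f)(y)| ≤ Σ_{l=1}^{m} s_{l+k}(f), where S_m(f) = f + f∘T + ⋯ + f∘T^{m−1} and T is the left shift. -/
/-- For `f` of product type, if `x` and `y` agree on the first `m + k`
coordinates, then `|S_m(f)(x) − S_m(f)(y)| ≤ ∑_{l=1}^m s_{l+k}`, where `t r = ∑_{j ≥ r} v j`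
(so `t (k + l + 1)` is the paper's `s_{l+k}`), `v n` bounds the oscillation of `fn n`,
and `S_m(f) = ∑_{j<m} f ∘ T^j` with `T` the left shift. -/
theorem stmt_1 {A : Type*} (fn : ℕ → A → ℝ) (f : (ℕ → A) → ℝ)
    (hf : ∀ x : ℕ → A, HasSum (fun n => fn n (x n)) (f x))
    (v t : ℕ → ℝ)
    (hv : ∀ (n : ℕ) (a b : A), |fn n a - fn n b| ≤ v n)
    (ht : ∀ r : ℕ, HasSum (fun n => v (r + n)) (t r))
    (m k : ℕ) (x y : ℕ → A) (hxy : ∀ i < m + k, x i = y i) :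
    |∑ j ∈ Finset.range m, f (fun i => x (i + j)) -
        ∑ j ∈ Finset.range m, f (fun i => y (i + j))| ≤
      ∑ l ∈ Finset.range m, t (k + l + 1) := by
  -- Key lemma: if x, y agree below r then |f x - f y| ≤ t r
  have key : ∀ (r : ℕ) (x y : ℕ → A), (∀ i < r, x i = y i) → |f x - f y| ≤ t r := by
    intro r x y h
    have hg : HasSum (fun n => fn n (x n) - fn n (y n)) (f x - f y) := (hf x).sub (hf y)
    have hzero : ∑ i ∈ Finset.range r, (fn i (x i) - fn i (y i)) = 0 := by
      apply Finset.sum_eq_zero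
      intro i hi
      rw [h i (Finset.mem_range.mp hi)]
      ring
    have hg' : HasSum (fun n => fn (n + r) (x (n + r)) - fn (n + r) (y (n + r)))
        (f x - f y) := by
      have := (hasSum_nat_add_iff' (f := fun n => fn n (x n) - fn n (y n)) r
        (g := f x - f y)).mpr hg
      simpa [hzero] using this
    have htr := ht r
    have h1 : f x - f y ≤ t r := by
      refine hasSum_le (fun n => ?_) hg' htr
      calc fn (n + r) (x (n + r)) - fn (n + r) (y (n + r))
          ≤ |fn (n + r) (x (n + r)) - fn (n + r) (y (n + r))| := le_abs_self _
        _ ≤ v (n + r) := hv _ _ _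
        _ = v (r + n) := by rw [Nat.add_comm]
    have h2 : -(f x - f y) ≤ t r := by
      refine hasSum_le (fun n => ?_) hg'.neg htr
      calc -(fn (n + r) (x (n + r)) - fn (n + r) (y (n + r)))
          ≤ |fn (n + r) (x (n + r)) - fn (n + r) (y (n + r))| := neg_le_abs _
        _ ≤ v (n + r) := hv _ _ _
        _ = v (r + n) := by rw [Nat.add_comm]
    exact abs_le.mpr ⟨by linarith, h1⟩
  rw [← Finset.sum_sub_distrib]
  calc |∑ j ∈ Finset.range m, (f (fun i => x (i + j)) - f (fun i => y (i + j)))|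
      ≤ ∑ j ∈ Finset.range m, |f (fun i => x (i + j)) - f (fun i => y (i + j))| :=
        Finset.abs_sum_le_sum_abs _ _
    _ ≤ ∑ j ∈ Finset.range m, t (m + k - j) := by
        refine Finset.sum_le_sum fun j hj => ?_
        refine key _ _ _ fun i hi => ?_
        have hj' := Finset.mem_range.mp hj
        exact hxy (i + j) (by omega)
    _ = ∑ l ∈ Finset.range m, t (k + l + 1) := by
        rw [← Finset.sum_range_reflect (fun l => t (k + l + 1)) m]
        refine Finset.sum_congr rfl fun j hj => ?_
        have hj' := Finset.mem_range.mp hj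
        congr 1
        omega
end

section
/- Let f be of product type and suppose Σ_{n≥k} s_n(f) < ∞ for some k ∈ ℕ, where s_n(f) = Σ_{j>n} sup_{a,b∈A}|f_j(a)−f_j(b)|. Then f belongs to Bowen's class: sup_{n∈ℕ} var_{n+k}(S_n(f)) < ∞. -/
/-- If `∑_{n ≥ k} s_n(f) < ∞` (here `t r = ∑_{j ≥ r} v j` plays the role of
`s_{r}` up to the index convention, and we assume `fun n => t (n + k)` summable), then `f`
of product type belongs to Bowen's class: `sup_n var_{n+k}(S_n(f)) < ∞`. -/
theorem stmt_2 {A : Type*} (fn : ℕ → A → ℝ) (f : (ℕ → A) → ℝ)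
    (hf : ∀ x : ℕ → A, HasSum (fun n => fn n (x n)) (f x))
    (v t : ℕ → ℝ)
    (hv : ∀ (n : ℕ) (a b : A), |fn n a - fn n b| ≤ v n)
    (ht : ∀ r : ℕ, HasSum (fun n => v (r + n)) (t r))
    (k : ℕ) (hsum : Summable fun n => t (n + k)) :
    ∃ C : ℝ, ∀ (n : ℕ) (x y : ℕ → A), (∀ i < n + k, x i = y i) →
      |∑ j ∈ Finset.range n, f (fun i => x (i + j)) -
          ∑ j ∈ Finset.range n, f (fun i => y (i + j))| ≤ C := by
  rcases isEmpty_or_nonempty A with hA | hA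
  · exact ⟨0, fun n x y _ => (IsEmpty.false (x 0)).elim⟩
  have hv0 : ∀ n, 0 ≤ v n := fun n => by
    have := hv n (Classical.arbitrary A) (Classical.arbitrary A)
    simpa using this
  have ht0 : ∀ r, 0 ≤ t r :=
    fun r => hasSum_le (fun i => hv0 (r + i)) hasSum_zero (ht r)
  have key : ∀ (m : ℕ) (x y : ℕ → A), (∀ i < m, x i = y i) → |f x - f y| ≤ t m := by
    intro m x y hxy
    have hg : HasSum (fun i => fn i (x i) - fn i (y i)) (f x - f y) := (hf x).sub (hf y)
    have hz : ∑ i ∈ Finset.range m, (fn i (x i) - fn i (y i)) = 0 := by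
      apply Finset.sum_eq_zero
      intro i hi
      rw [hxy i (Finset.mem_range.mp hi)]; ring
    have hg' : HasSum (fun i => fn (i + m) (x (i + m)) - fn (i + m) (y (i + m)))
        (f x - f y) := by
      have h2 := (hasSum_nat_add_iff' (f := fun i => fn i (x i) - fn i (y i)) m).mpr hg
      rwa [hz, sub_zero] at h2
    have hb : ∀ i, |fn (i + m) (x (i + m)) - fn (i + m) (y (i + m))| ≤ v (m + i) := by
      intro i
      have := hv (i + m) (x (i + m)) (y (i + m))
      simpa [Nat.add_comm] using this
    rw [abs_le]
    constructor
    · have hneg : HasSum (fun i => -v (m + i)) (-t m) := (ht m).neg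
      exact hasSum_le (fun i => neg_le_of_abs_le (hb i)) hneg hg'
    · exact hasSum_le (fun i => le_of_abs_le (hb i)) hg' (ht m)
  have hsum' : Summable (fun j => t (k + 1 + j)) := by
    have h1 := (summable_nat_add_iff (f := fun n => t (n + k)) 1).mpr hsum
    have he : (fun j => t (k + 1 + j)) = fun j => t (j + 1 + k) := by
      funext j; congr 1; omega
    rwa [he]
  refine ⟨∑' j, t (k + 1 + j), ?_⟩
  intro n x y hxy
  calc |∑ j ∈ Finset.range n, f (fun i => x (i + j)) -
          ∑ j ∈ Finset.range n, f (fun i => y (i + j))|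
      = |∑ j ∈ Finset.range n, (f (fun i => x (i + j)) - f (fun i => y (i + j)))| := by
        rw [Finset.sum_sub_distrib]
    _ ≤ ∑ j ∈ Finset.range n, |f (fun i => x (i + j)) - f (fun i => y (i + j))| :=
        Finset.abs_sum_le_sum_abs _ _
    _ ≤ ∑ j ∈ Finset.range n, t (k + 1 + (n - 1 - j)) := by
        apply Finset.sum_le_sum
        intro j hj
        have hjn := Finset.mem_range.mp hj
        apply key
        intro i hi
        exact hxy (i + j) (by omega)
    _ = ∑ j ∈ Finset.range n, t (k + 1 + j) :=
        Finset.sum_range_reflect (fun j => t (k + 1 + j)) n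
    _ ≤ ∑' j, t (k + 1 + j) := Summable.sum_le_tsum _ (fun i _ => ht0 _) hsum'
end

section
/- Let f be of product type with lim_{m→∞} (1/m) Σ_{n=1}^m s_n(f) = 0, where s_n(f) = Σ_{j>n} sup_{a,b∈A}|f_j(a)−f_j(b)|. Then f is in Yuri's class: lim_{n→∞} (1/n) var_n(S_n(f)) = 0. -/
open Filter Finset

/-- If the Cesàro averages of `s_n(f)` tend to `0` (with `t n` playing the
role of `s_n`), then `f` of product type is in Yuri's class:
`(1/n) var_n(S_n(f)) → 0`, expressed via a bound `V n` on `var_n(S_n(f))` with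
`V n / n → 0`. -/
theorem stmt_3 {A : Type*} (fn : ℕ → A → ℝ) (f : (ℕ → A) → ℝ)
    (hf : ∀ x : ℕ → A, HasSum (fun n => fn n (x n)) (f x))
    (v t : ℕ → ℝ)
    (hv : ∀ (n : ℕ) (a b : A), |fn n a - fn n b| ≤ v n)
    (ht : ∀ r : ℕ, HasSum (fun n => v (r + n)) (t r))
    (hces : Filter.Tendsto (fun m : ℕ => (∑ n ∈ Finset.range m, t n) / (m : ℝ))
      Filter.atTop (nhds 0)) :
    ∃ V : ℕ → ℝ,
      (∀ (n : ℕ) (x y : ℕ → A), (∀ i < n, x i = y i) →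
        |∑ j ∈ Finset.range n, f (fun i => x (i + j)) -
            ∑ j ∈ Finset.range n, f (fun i => y (i + j))| ≤ V n) ∧
      Filter.Tendsto (fun n : ℕ => V n / (n : ℝ)) Filter.atTop (nhds 0) := by
  by_cases hA : Nonempty A
  swap
  · refine ⟨fun _ => 0, ?_, by simpa using (tendsto_const_nhds : Tendsto (fun _ : ℕ => (0:ℝ)) atTop (nhds 0))⟩
    intro n x y _
    exact (hA ⟨x 0⟩).elim
  obtain ⟨a0⟩ := hA
  have hv0 : ∀ n, 0 ≤ v n := fun n => (abs_nonneg _).trans (hv n a0 a0)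
  have ht0 : ∀ r, 0 ≤ t r := fun r => (ht r).nonneg (fun n => hv0 _)
  -- key per-term bound
  have key : ∀ (n j : ℕ) (x y : ℕ → A), (∀ i < n, x i = y i) → j < n →
      |f (fun i => x (i + j)) - f (fun i => y (i + j))| ≤ t (n - j) := by
    intro n j x y hxy hj
    set m := n - j with hm
    set g : ℕ → ℝ := fun k => fn k (x (k + j)) - fn k (y (k + j)) with hgdef
    have hg : HasSum g (f (fun i => x (i + j)) - f (fun i => y (i + j))) :=
      (hf _).sub (hf _)
    set h : ℕ → ℝ := fun k => if k < m then 0 else v k with hhdef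
    have hgh : ∀ k, |g k| ≤ h k := by
      intro k
      by_cases hk : k < m
      · have hxe : x (k + j) = y (k + j) := hxy _ (by omega)
        simp [hgdef, hhdef, hk, hxe]
      · simpa [hgdef, hhdef, hk] using hv k (x (k + j)) (y (k + j))
    set w : ℕ → ℝ := fun k => if k < m then v k else 0 with hwdef
    have hw : HasSum w (∑ k ∈ range m, v k) := by
      have h1 : HasSum w (∑ k ∈ range m, w k) :=
        hasSum_sum_of_ne_finset_zero (by
          intro k hk
          simp only [hwdef]
          rw [if_neg (by simpa using hk)])
      have h2 : ∑ k ∈ range m, w k = ∑ k ∈ range m, v k := by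
        apply Finset.sum_congr rfl
        intro k hk
        simp only [hwdef]
        rw [if_pos (mem_range.mp hk)]
      rwa [h2] at h1
    have hvm : HasSum v (t m + ∑ k ∈ range m, v k) := by
      have h1 : HasSum (fun k => v (k + m)) (t m) := by
        simpa [add_comm] using ht m
      exact (hasSum_nat_add_iff m).mp h1
    have hh : HasSum h (t m) := by
      have h3 := hvm.sub hw
      have heq : (fun k => v k - w k) = h := by
        funext k
        by_cases hk : k < m <;> simp [hwdef, hhdef, hk]
      rw [heq] at h3
      simpa using h3
    refine abs_le.mpr ⟨?_, ?_⟩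
    · have hhg : ∀ k, -h k ≤ g k := fun k => neg_le_of_abs_le (hgh k)
      simpa using hasSum_le hhg hh.neg hg
    · exact hasSum_le (fun k => (le_abs_self _).trans (hgh k)) hg hh
  refine ⟨fun n => ∑ r ∈ range (n + 1), t r, ?_, ?_⟩
  · intro n x y hxy
    calc |∑ j ∈ range n, f (fun i => x (i + j)) - ∑ j ∈ range n, f (fun i => y (i + j))|
        = |∑ j ∈ range n, (f (fun i => x (i + j)) - f (fun i => y (i + j)))| := by
          rw [Finset.sum_sub_distrib]
      _ ≤ ∑ j ∈ range n, |f (fun i => x (i + j)) - f (fun i => y (i + j))| :=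
          Finset.abs_sum_le_sum_abs _ _
      _ ≤ ∑ j ∈ range n, t (n - j) :=
          Finset.sum_le_sum fun j hj => key n j x y hxy (mem_range.mp hj)
      _ = ∑ j ∈ range n, t (j + 1) := by
          rw [← Finset.sum_range_reflect (fun j => t (j + 1)) n]
          apply Finset.sum_congr rfl
          intro j hj
          congr 1
          have := mem_range.mp hj
          omega
      _ ≤ ∑ r ∈ range (n + 1), t r := by
          rw [Finset.sum_range_succ' t n]
          have : 0 ≤ t 0 := ht0 0
          linarith
  · have heq : ∀ n : ℕ, (∑ r ∈ range (n + 1), t r) / (n : ℝ)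
        = ((∑ r ∈ range (n + 1), t r) / ((n : ℝ) + 1)) * (((n : ℝ) + 1) / (n : ℝ)) := by
      intro n
      rw [div_mul_div_comm, mul_comm ((∑ r ∈ range (n + 1), t r)) (((n : ℝ) + 1)),
        mul_div_mul_left _ _ (by positivity : ((n : ℝ) + 1) ≠ 0)]
    have h1 : Tendsto (fun n : ℕ => (∑ r ∈ range (n + 1), t r) / ((n : ℝ) + 1)) atTop (nhds 0) := by
      have := hces.comp (tendsto_add_atTop_nat 1)
      simpa [Function.comp_def] using this
    have h2 : Tendsto (fun n : ℕ => ((n : ℝ) + 1) / (n : ℝ)) atTop (nhds 1) := by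
      have hcg : (fun n : ℕ => ((n : ℝ) + 1) / (n : ℝ)) =ᶠ[atTop] fun n : ℕ => 1 + 1 / (n : ℝ) := by
        filter_upwards [eventually_gt_atTop 0] with n hn
        have : (n : ℝ) ≠ 0 := by positivity
        field_simp
      rw [tendsto_congr' hcg]
      simpa using ((tendsto_const_nhds.add tendsto_one_div_atTop_nhds_zero_nat : Tendsto (fun n : ℕ => (1:ℝ) + 1 / (n : ℝ)) atTop (nhds (1 + 0))))
    have h3 := h1.mul h2
    rw [zero_mul] at h3
    exact Tendsto.congr (fun n => (heq n).symm) h3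
end

section
/- Let g(x) = Π_{n=1}^∞ g_n(x_n) be a positive potential of product type on A^ℕ. If μ = ⊗ μ_n is a product probability measure, positive on open sets, which is conformal for g (i.e. μ(T(C)) = λ ∫_C g dμ for all cylinders C and some λ > 0), then necessarily μ_n(a) = (Σ_{b∈A} Π_{i=1}^n g_i(a)/g_i(b))^{−1} for all n ∈ ℕ and a ∈ A. In particular such a conformal product measure is unique. -/
/-- Let `g(x) = ∏ g_n(x_n)` be a positive potential of product type and
`μ = ⊗ μ_n` a product probability measure (weights `w n`, positive, summing to `1`)
which is conformal for `g` with parameter `λ > 0`, i.e. `μ(T(C)) = λ ∫_C g dμ` on all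
cylinders — which, for a product measure, is exactly the displayed family of identities
(`w i` indexed from `0`, the tail integral being `∏_{i > n} ∑_b g_i(b) w_i(b)`).
Then necessarily `w n a = (∑_b ∏_{i=1}^{n+1} g_i(a)/g_i(b))⁻¹`; in particular the
conformal product measure is unique. -/
theorem stmt_5 {A : Type*} [Countable A]
    (g : ℕ → A → ℝ) (hg : ∀ (n : ℕ) (a : A), 0 < g n a)
    (w : ℕ → A → ℝ) (hw_pos : ∀ (n : ℕ) (a : A), 0 < w n a)
    (hw_prob : ∀ n : ℕ, HasSum (w n) 1)
    (lam : ℝ) (hlam : 0 < lam)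
    (hconf : ∀ (n : ℕ) (a : ℕ → A),
      ∏ i ∈ Finset.range n, w i (a (i + 1)) =
        lam * (∏ i ∈ Finset.range (n + 1), g i (a i) * w i (a i)) *
          ∏' i : ℕ, ∑' b : A, g (n + 1 + i) b * w (n + 1 + i) b) :
    ∀ (n : ℕ) (a : A),
      w n a = (∑' b : A, ∏ i ∈ Finset.range (n + 1), g i a / g i b)⁻¹ := by
  have hA : Nonempty A := by
    by_contra h
    rw [not_nonempty_iff] at h
    exact one_ne_zero ((hw_prob 0).unique hasSum_empty)
  obtain ⟨d⟩ := hA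
  -- Claim 1 : g 0 b * w 0 b is constant in b
  have claim1 : ∀ b c : A, g 0 b * w 0 b = g 0 c * w 0 c := by
    intro b c
    have Eb := hconf 0 (fun _ => b)
    have Ec := hconf 0 (fun _ => c)
    norm_num [Finset.prod_range_one] at Eb Ec
    linear_combination (g 0 b * w 0 b) * Ec - (g 0 c * w 0 c) * Eb
  -- Claim 2
  have claim2 : ∀ (n : ℕ) (b c : A),
      w n b * (g (n+1) c * w (n+1) c) = w n c * (g (n+1) b * w (n+1) b) := by
    intro n b c
    have hL : ∀ x : A, (∏ i ∈ Finset.range (n+1),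
        w i ((fun j => if j = n+1 then x else d) (i+1))) =
        (∏ i ∈ Finset.range n, w i d) * w n x := by
      intro x
      rw [Finset.prod_range_succ]
      congr 1
      · refine Finset.prod_congr rfl fun i hi => ?_
        have h : i + 1 ≠ n + 1 := by have := Finset.mem_range.mp hi; omega
        simp [show i ≠ n by omega]
      · simp
    have hR : ∀ x : A, (∏ i ∈ Finset.range (n+1+1),
        g i ((fun j => if j = n+1 then x else d) i) *
        w i ((fun j => if j = n+1 then x else d) i)) =
        (∏ i ∈ Finset.range (n+1), g i d * w i d) * (g (n+1) x * w (n+1) x) := by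
      intro x
      rw [Finset.prod_range_succ]
      congr 1
      · refine Finset.prod_congr rfl fun i hi => ?_
        have h : i ≠ n + 1 := by have := Finset.mem_range.mp hi; omega
        simp [h]
      · simp
    have Eb := hconf (n+1) (fun j => if j = n+1 then b else d)
    have Ec := hconf (n+1) (fun j => if j = n+1 then c else d)
    rw [hL b, hR b] at Eb
    rw [hL c, hR c] at Ec
    have hLpos : (0:ℝ) < ∏ i ∈ Finset.range n, w i d :=
      Finset.prod_pos fun i _ => hw_pos i d
    apply mul_left_cancel₀ hLpos.ne'
    linear_combination (g (n+1) c * w (n+1) c) * Eb - (g (n+1) b * w (n+1) b) * Ec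
  -- F n b := w n b * ∏_{i ≤ n} g i b is constant in b
  have claimF : ∀ (n : ℕ) (b c : A),
      w n b * ∏ i ∈ Finset.range (n+1), g i b = w n c * ∏ i ∈ Finset.range (n+1), g i c := by
    intro n
    induction n with
    | zero =>
      intro b c
      simp only [zero_add, Finset.prod_range_one]
      rw [mul_comm, mul_comm (w 0 c)]
      exact claim1 b c
    | succ n ih =>
      intro b c
      have h2 := claim2 n b c
      have hib := ih b c
      have hFc : (0:ℝ) < w n c * ∏ i ∈ Finset.range (n+1), g i c :=
        mul_pos (hw_pos n c) (Finset.prod_pos fun i _ => hg i c)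
      have key : (w (n+1) b * ∏ i ∈ Finset.range (n+1+1), g i b) *
          (w n c * ∏ i ∈ Finset.range (n+1), g i c) =
          (w (n+1) c * ∏ i ∈ Finset.range (n+1+1), g i c) *
          (w n b * ∏ i ∈ Finset.range (n+1), g i b) := by
        rw [Finset.prod_range_succ (fun i => g i b) (n+1),
          Finset.prod_range_succ (fun i => g i c) (n+1)]
        linear_combination
          (-(∏ i ∈ Finset.range (n+1), g i b) * ∏ i ∈ Finset.range (n+1), g i c) * h2
      rw [hib] at key
      exact mul_right_cancel₀ hFc.ne' key
  -- Final assembly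
  intro n a
  set C : ℝ := w n a * ∏ i ∈ Finset.range (n+1), g i a with hCdef
  have hCpos : (0:ℝ) < C :=
    mul_pos (hw_pos n a) (Finset.prod_pos fun i _ => hg i a)
  have hb : ∀ b : A, w n b = C * (∏ i ∈ Finset.range (n+1), g i b)⁻¹ := by
    intro b
    have hPb : (0:ℝ) < ∏ i ∈ Finset.range (n+1), g i b :=
      Finset.prod_pos fun i _ => hg i b
    rw [eq_mul_inv_iff_mul_eq₀ hPb.ne']
    exact claimF n b a
  have hs : HasSum (fun b => C * (∏ i ∈ Finset.range (n+1), g i b)⁻¹) 1 := by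
    have := hw_prob n
    rwa [show w n = fun b => C * (∏ i ∈ Finset.range (n+1), g i b)⁻¹ from funext hb] at this
  have hs2 : HasSum (fun b => (∏ i ∈ Finset.range (n+1), g i b)⁻¹) C⁻¹ := by
    simpa [← mul_assoc, inv_mul_cancel₀ hCpos.ne'] using hs.mul_left C⁻¹
  have hPa : (0:ℝ) < ∏ i ∈ Finset.range (n+1), g i a :=
    Finset.prod_pos fun i _ => hg i a
  have hfe : (fun b => ∏ i ∈ Finset.range (n+1), g i a / g i b) =
      fun b => (∏ i ∈ Finset.range (n+1), g i a) * (∏ i ∈ Finset.range (n+1), g i b)⁻¹ := by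
    funext b
    rw [Finset.prod_div_distrib, div_eq_mul_inv]
  have hsum : HasSum (fun b => ∏ i ∈ Finset.range (n+1), g i a / g i b)
      ((∏ i ∈ Finset.range (n+1), g i a) * C⁻¹) := by
    rw [hfe]
    exact hs2.mul_left _
  rw [hsum.tsum_eq, mul_inv, inv_inv, hCdef]
  field_simp
end

section
/- Under the hypothesis of Theorem (uniqueness of conformal measures): if A is finite, any two conformal measures μ, ν for g (with g of product type satisfying the double summability condition Σ_{i} Σ_{k≥i} log max{‖g_k‖_∞, ‖g_k^{−1}‖_∞} < ∞) satisfy K^{−1} ≤ μ([a_1,…,a_n])/ν([a_1,…,a_n]) ≤ K for all cylinders, where K = Π_{i=1}^∞ K_i and K_i = Π_{k=i}^∞ max{‖g_k‖_∞^2, ‖g_k^{−1}‖_∞^2}. In particular μ and ν are equivalent measures. -/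
open MeasureTheory

/-- The left shift on `A^ℕ`. -/
def shiftMap (A : Type*) : (ℕ → A) → ℕ → A := fun x n => x (n + 1)

/-- `ν` is conformal for the potential `G` with parameter `lam`. -/
def IsConformalFor {A : Type*} [MeasurableSpace A] (G : (ℕ → A) → ℝ) (lam : ℝ)
    (ν : Measure (ℕ → A)) : Prop :=
  ∀ C : Set (ℕ → A), MeasurableSet C → Set.InjOn (shiftMap A) C →
    ν (shiftMap A '' C) = ENNReal.ofReal (lam * ∫ x in C, G x ∂ν)

namespace Stmt8Aux

open Real Filter Topology
open scoped ENNReal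
set_option linter.unusedSectionVars false

variable {A : Type*} [Fintype A] [Nonempty A] [MeasurableSpace A] [MeasurableSingletonClass A]

/-- The cylinder of length `n` determined by `a`. -/
def Cyl (n : ℕ) (a : ℕ → A) : Set (ℕ → A) := {x | ∀ i < n, x i = a i}

lemma measurableSet_cyl (n : ℕ) (a : ℕ → A) : MeasurableSet (Cyl n a) := by
  have h : Cyl n a = ⋂ i ∈ Finset.range n, (fun x : ℕ → A => x i) ⁻¹' {a i} := by
    ext x; simp [Cyl]
  rw [h]
  exact MeasurableSet.biInter (Finset.range n).countable_toSet fun i _ =>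
    (measurable_pi_apply i) (measurableSet_singleton (a i))

lemma cyl_zero (a : ℕ → A) : Cyl 0 a = Set.univ := by
  ext x; simp [Cyl]

lemma mem_cyl_self (n : ℕ) (x : ℕ → A) : x ∈ Cyl n x := fun _ _ => rfl

lemma cyl_eq_of_agree {n : ℕ} {x y : ℕ → A} (h : ∀ i < n, x i = y i) :
    Cyl n x = Cyl n y := by
  ext z
  constructor <;> intro hz i hi
  · rw [hz i hi, h i hi]
  · rw [hz i hi, h i hi]

lemma cyl_disjoint {n : ℕ} {x y : ℕ → A} (h : ¬ ∀ i < n, x i = y i) :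
    Disjoint (Cyl n x) (Cyl n y) := by
  rw [Set.disjoint_left]
  intro z hz hz'
  exact h fun i hi => by rw [← hz i hi, hz' i hi]

lemma shift_image_cyl (n : ℕ) (a : ℕ → A) :
    shiftMap A '' Cyl (n + 1) a = Cyl n (fun i => a (i + 1)) := by
  ext y
  constructor
  · rintro ⟨x, hx, rfl⟩ i hi
    exact hx (i + 1) (by omega)
  · intro hy
    refine ⟨fun i => Nat.casesOn i (a 0) y, fun i hi => ?_, by funext i; rfl⟩
    cases i with
    | zero => rfl
    | succ j => exact hy j (by omega)

lemma shift_injOn_cyl (n : ℕ) (a : ℕ → A) : Set.InjOn (shiftMap A) (Cyl (n + 1) a) := by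
  intro x hx y hy h
  funext i
  cases i with
  | zero => rw [hx 0 (Nat.succ_pos n), hy 0 (Nat.succ_pos n)]
  | succ j => exact congrFun h j

section Analytic

variable (g : ℕ → A → ℝ)

/-- The sup norm quantity. -/
noncomputable def Mg (k : ℕ) : ℝ := ⨆ a : A, max (g k a) (g k a)⁻¹

/-- Its logarithm. -/
noncomputable def Lg (k : ℕ) : ℝ := Real.log (Mg g k)

/-- The tail sums. -/
noncomputable def Tg (m : ℕ) : ℝ := ∑' j : ℕ, Lg g (m + j)

/-- Partial log-weights of a word. -/
noncomputable def Pg (m : ℕ) (a : ℕ → A) : ℝ := ∑ i ∈ Finset.range m, Real.log (g i (a i))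

lemma le_Mg (k : ℕ) (a : A) : max (g k a) (g k a)⁻¹ ≤ Mg g k := by
  unfold Mg
  exact le_ciSup (f := fun a : A => max (g k a) (g k a)⁻¹)
    (Set.Finite.bddAbove (Set.finite_range _)) a

variable (hg : ∀ (k : ℕ) (a : A), 0 < g k a)

include hg

lemma one_le_Mg (k : ℕ) : 1 ≤ Mg g k := by
  obtain ⟨a⟩ := (inferInstance : Nonempty A)
  refine le_trans ?_ (le_Mg g k a)
  rcases le_total 1 (g k a) with h | h
  · exact le_max_of_le_left h
  · exact le_max_of_le_right ((one_le_inv_iff₀).2 ⟨hg k a, h⟩)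

lemma Mg_pos (k : ℕ) : 0 < Mg g k := lt_of_lt_of_le one_pos (one_le_Mg g hg k)

lemma Lg_nonneg (k : ℕ) : 0 ≤ Lg g k := Real.log_nonneg (one_le_Mg g hg k)

lemma abs_log_g_le (k : ℕ) (a : A) : |Real.log (g k a)| ≤ Lg g k := by
  rw [abs_le]
  constructor
  · rw [neg_le, ← Real.log_inv]
    exact Real.log_le_log (inv_pos.2 (hg k a)) ((le_max_right _ _).trans (le_Mg g k a))
  · exact Real.log_le_log (hg k a) ((le_max_left _ _).trans (le_Mg g k a))

variable (hsum : Summable fun p : ℕ × ℕ => Lg g (p.1 + p.2))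

include hsum

lemma summable_Lg_row (i : ℕ) : Summable fun j => Lg g (i + j) := by
  have hinj : Function.Injective fun j : ℕ => ((i, j) : ℕ × ℕ) :=
    fun a b h => by simpa using congrArg Prod.snd h
  have h := hsum.comp_injective hinj
  simpa [Function.comp_def] using h

lemma summable_Lg : Summable (Lg g) := by
  simpa using summable_Lg_row g hg hsum 0

lemma summable_Lg_add (m : ℕ) : Summable fun j => Lg g (j + m) := by
  exact (summable_nat_add_iff m).2 (summable_Lg g hg hsum)

lemma Tg_nonneg (m : ℕ) : 0 ≤ Tg g m := tsum_nonneg fun j => Lg_nonneg g hg _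

lemma summable_Tg : Summable (Tg g) :=
  HasSum.summable (hsum.hasSum.prod_fiberwise fun i => (summable_Lg_row g hg hsum i).hasSum)

lemma sum_le_tsum_Tg (n : ℕ) :
    ∑ m ∈ Finset.range n, Tg g (m + 1) ≤ ∑' i, Tg g i := by
  have h1 : ∑ m ∈ Finset.range n, Tg g (m + 1) ≤ ∑ m ∈ Finset.range (n + 1), Tg g m := by
    rw [Finset.sum_range_succ']
    exact le_add_of_nonneg_right (Tg_nonneg g hg hsum 0)
  exact h1.trans ((summable_Tg g hg hsum).sum_le_tsum _ (fun i _ => Tg_nonneg g hg hsum i))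

lemma summable_log_g (x : ℕ → A) : Summable fun i => Real.log (g i (x i)) := by
  refine Summable.of_abs ?_
  exact Summable.of_nonneg_of_le (fun i => abs_nonneg _)
    (fun i => abs_log_g_le g hg i (x i)) (summable_Lg g hg hsum)

lemma hasProd_g (x : ℕ → A) :
    HasProd (fun i => g i (x i)) (Real.exp (∑' i, Real.log (g i (x i)))) := by
  have h := (summable_log_g g hg hsum x).hasSum.rexp
  have he : (Real.exp ∘ fun i => Real.log (g i (x i))) = fun i => g i (x i) :=
    funext fun i => Real.exp_log (hg i (x i))
  rwa [he] at h

lemma tprod_g (x : ℕ → A) :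
    ∏' i, g i (x i) = Real.exp (∑' i, Real.log (g i (x i))) :=
  (hasProd_g g hg hsum x).tprod_eq

lemma abs_tail_le (m : ℕ) (x : ℕ → A) :
    |∑' j, Real.log (g (j + m) (x (j + m)))| ≤ Tg g m := by
  have habs : Summable fun j => |Real.log (g (j + m) (x (j + m)))| := by
    refine Summable.of_nonneg_of_le (fun j => abs_nonneg _)
      (fun j => abs_log_g_le g hg (j + m) (x (j + m))) (summable_Lg_add g hg hsum m)
  calc |∑' j, Real.log (g (j + m) (x (j + m)))|
      ≤ ∑' j, |Real.log (g (j + m) (x (j + m)))| := by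
        simpa [Real.norm_eq_abs] using
          norm_tsum_le_tsum_norm (f := fun j => Real.log (g (j + m) (x (j + m))))
            (by simpa [Real.norm_eq_abs] using habs)
    _ ≤ ∑' j, Lg g (m + j) := by
        refine habs.tsum_le_tsum (fun j => ?_) (summable_Lg_row g hg hsum m)
        exact le_of_le_of_eq (abs_log_g_le g hg (j + m) (x (j + m)))
          (congrArg (Lg g) (Nat.add_comm j m))
    _ = Tg g m := rfl

lemma tsum_log_on_cyl {m : ℕ} {a x : ℕ → A} (hx : x ∈ Cyl m a) :
    ∑' i, Real.log (g i (x i)) =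
      Pg g m a + ∑' j, Real.log (g (j + m) (x (j + m))) := by
  rw [← (summable_log_g g hg hsum x).sum_add_tsum_nat_add m]
  congr 1
  exact Finset.sum_congr rfl fun i hi => by rw [hx i (Finset.mem_range.1 hi)]

lemma G_bounds_on_cyl {g0 : ℝ} (hg0 : 0 < g0) {m : ℕ} {a x : ℕ → A} (hx : x ∈ Cyl m a) :
    g0 * Real.exp (Pg g m a - Tg g m) ≤ g0 * ∏' i, g i (x i) ∧
      g0 * ∏' i, g i (x i) ≤ g0 * Real.exp (Pg g m a + Tg g m) := by
  have ht := abs_le.1 (abs_tail_le g hg hsum m x)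
  rw [tprod_g g hg hsum x, tsum_log_on_cyl g hg hsum hx]
  constructor
  · exact mul_le_mul_of_nonneg_left (Real.exp_le_exp.2 (by linarith [ht.1])) hg0.le
  · exact mul_le_mul_of_nonneg_left (Real.exp_le_exp.2 (by linarith [ht.2])) hg0.le

lemma G_pos {g0 : ℝ} (hg0 : 0 < g0) (x : ℕ → A) : 0 < g0 * ∏' i, g i (x i) := by
  rw [tprod_g g hg hsum x]
  positivity

lemma G_le {g0 : ℝ} (hg0 : 0 < g0) (x : ℕ → A) :
    g0 * ∏' i, g i (x i) ≤ g0 * Real.exp (Tg g 0) := by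
  have h := (G_bounds_on_cyl g hg hsum hg0 (mem_cyl_self 0 x)).2
  simpa [Pg] using h

lemma measurable_G (g0 : ℝ) : Measurable fun x : ℕ → A => g0 * ∏' i, g i (x i) := by
  have hmeas : Measurable fun x : ℕ → A => ∑' i, Real.log (g i (x i)) := by
    refine measurable_of_tendsto_metrizable' (u := atTop)
      (f := fun n x => ∑ i ∈ Finset.range n, Real.log (g i (x i))) (fun n => ?_) ?_
    · exact Finset.measurable_sum _ fun i _ =>
        (Real.measurable_log.comp (Measurable.of_discrete.comp (measurable_pi_apply i)))
    · rw [tendsto_pi_nhds]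
      intro x
      exact (summable_log_g g hg hsum x).hasSum.tendsto_sum_nat
  have heq : (fun x : ℕ → A => g0 * ∏' i, g i (x i)) =
      fun x => g0 * Real.exp (∑' i, Real.log (g i (x i))) :=
    funext fun x => by rw [tprod_g g hg hsum x]
  rw [heq]
  exact measurable_const.mul (Real.measurable_exp.comp hmeas)

lemma conformal_step (g0 : ℝ) (hg0 : 0 < g0) (ρ : Measure (ℕ → A)) [IsProbabilityMeasure ρ]
    {lam : ℝ} (hlam : 0 < lam)
    (hρ : IsConformalFor (fun x => g0 * ∏' i : ℕ, g i (x i)) lam ρ) (m : ℕ) (a : ℕ → A) :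
    lam * (g0 * Real.exp (Pg g (m + 1) a - Tg g (m + 1))) * (ρ (Cyl (m + 1) a)).toReal ≤
        (ρ (Cyl m (fun i => a (i + 1)))).toReal ∧
      (ρ (Cyl m (fun i => a (i + 1)))).toReal ≤
        lam * (g0 * Real.exp (Pg g (m + 1) a + Tg g (m + 1))) * (ρ (Cyl (m + 1) a)).toReal := by
  set C := Cyl (m + 1) a with hCdef
  have hC : MeasurableSet C := measurableSet_cyl _ _
  have hconf := hρ C hC (shift_injOn_cyl m a)
  rw [shift_image_cyl] at hconf
  have hint : IntegrableOn (fun x : ℕ → A => g0 * ∏' i, g i (x i)) C ρ := by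
    refine Integrable.mono' (integrable_const (g0 * Real.exp (Tg g 0)))
      ((measurable_G g hg hsum g0).aestronglyMeasurable) (ae_of_all _ fun x => ?_)
    rw [Real.norm_eq_abs, abs_of_pos (G_pos g hg hsum hg0 x)]
    exact G_le g hg hsum hg0 x
  have hlow : g0 * Real.exp (Pg g (m + 1) a - Tg g (m + 1)) * (ρ C).toReal ≤
      ∫ x in C, g0 * ∏' i, g i (x i) ∂ρ := by
    have := setIntegral_mono_on (integrable_const _).integrableOn hint hC
      (fun x hx => (G_bounds_on_cyl g hg hsum hg0 hx).1)
    rwa [setIntegral_const, smul_eq_mul, mul_comm] at this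
  have hup : (∫ x in C, g0 * ∏' i, g i (x i) ∂ρ) ≤
      g0 * Real.exp (Pg g (m + 1) a + Tg g (m + 1)) * (ρ C).toReal := by
    have := setIntegral_mono_on hint (integrable_const _).integrableOn hC
      (fun x hx => (G_bounds_on_cyl g hg hsum hg0 hx).2)
    rwa [setIntegral_const, smul_eq_mul, mul_comm] at this
  have hInonneg : 0 ≤ ∫ x in C, g0 * ∏' i, g i (x i) ∂ρ := by
    refine le_trans ?_ hlow
    positivity
  have hmr : (ρ (Cyl m (fun i => a (i + 1)))).toReal =
      lam * ∫ x in C, g0 * ∏' i, g i (x i) ∂ρ := by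
    rw [hconf, ENNReal.toReal_ofReal (by positivity)]
  constructor
  · rw [hmr, mul_assoc]
    exact mul_le_mul_of_nonneg_left hlow hlam.le
  · rw [hmr, mul_assoc]
    exact mul_le_mul_of_nonneg_left hup hlam.le

lemma ratio_le (g0 : ℝ) (hg0 : 0 < g0) (μ ν : Measure (ℕ → A))
    [IsProbabilityMeasure μ] [IsProbabilityMeasure ν]
    {lamμ lamν : ℝ} (hlamμ : 0 < lamμ) (hlamν : 0 < lamν)
    (hμ : IsConformalFor (fun x => g0 * ∏' i : ℕ, g i (x i)) lamμ μ)
    (hν : IsConformalFor (fun x => g0 * ∏' i : ℕ, g i (x i)) lamν ν) (n : ℕ) :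
    ∀ a : ℕ → A, (μ (Cyl n a)).toReal ≤
      (lamν / lamμ) ^ n * Real.exp (2 * ∑ m ∈ Finset.range n, Tg g (m + 1)) *
        (ν (Cyl n a)).toReal := by
  induction n with
  | zero =>
    intro a
    simp [cyl_zero]
  | succ n ih =>
    intro a
    obtain ⟨h1μ, -⟩ := conformal_step g hg hsum g0 hg0 μ hlamμ hμ n a
    obtain ⟨-, h2ν⟩ := conformal_step g hg hsum g0 hg0 ν hlamν hν n a
    set b := fun i => a (i + 1) with hb
    set X := (μ (Cyl (n + 1) a)).toReal with hX
    set Y := (ν (Cyl (n + 1) a)).toReal with hY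
    set X' := (μ (Cyl n b)).toReal with hX'
    set Y' := (ν (Cyl n b)).toReal with hY'
    set P := Pg g (n + 1) a with hP
    set T := Tg g (n + 1) with hT
    set S := ∑ m ∈ Finset.range n, Tg g (m + 1) with hS
    set r := lamν / lamμ with hr
    have hc : 0 < lamμ * (g0 * Real.exp (P - T)) := by positivity
    have key : lamμ * (g0 * Real.exp (P - T)) * X ≤
        lamμ * (g0 * Real.exp (P - T)) *
          (r ^ (n + 1) * Real.exp (2 * ∑ m ∈ Finset.range (n + 1), Tg g (m + 1)) * Y) := by
      calc lamμ * (g0 * Real.exp (P - T)) * X ≤ X' := h1μ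
        _ ≤ r ^ n * Real.exp (2 * S) * Y' := ih b
        _ ≤ r ^ n * Real.exp (2 * S) * (lamν * (g0 * Real.exp (P + T)) * Y) := by
            refine mul_le_mul_of_nonneg_left h2ν ?_
            positivity
        _ = lamμ * (g0 * Real.exp (P - T)) *
            (r ^ (n + 1) * Real.exp (2 * ∑ m ∈ Finset.range (n + 1), Tg g (m + 1)) * Y) := by
            rw [Finset.sum_range_succ, ← hS, ← hT, mul_add, Real.exp_add (2 * S),
              Real.exp_sub, Real.exp_add P T, pow_succ, hr]
            have h2T : Real.exp (2 * T) = Real.exp T * Real.exp T := by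
              rw [two_mul, Real.exp_add]
            rw [h2T]
            field_simp
    exact le_of_mul_le_mul_left key hc

end Analytic

/-- Extension of a finite word to an infinite one. -/
noncomputable def extFun (n : ℕ) (w : Fin n → A) : ℕ → A :=
  fun i => if h : i < n then w ⟨i, h⟩ else Classical.arbitrary A

lemma extFun_spec (n : ℕ) (w : Fin n → A) (i : ℕ) (h : i < n) : extFun n w i = w ⟨i, h⟩ := by
  simp [extFun, h]

lemma iUnion_cyl_extFun (n : ℕ) : ⋃ w : Fin n → A, Cyl n (extFun n w) = Set.univ := by
  refine Set.eq_univ_of_forall fun x => ?_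
  refine Set.mem_iUnion.2 ⟨fun i => x i, fun i hi => ?_⟩
  rw [extFun_spec n _ i hi]

lemma pairwise_disjoint_cyl_extFun (n : ℕ) :
    Pairwise (Function.onFun Disjoint fun w : Fin n → A => Cyl n (extFun n w)) := by
  intro w w' hww'
  refine cyl_disjoint fun h => hww' ?_
  funext i
  have := h i i.2
  rwa [extFun_spec n w i i.2, extFun_spec n w' i i.2] at this

lemma sum_cyl_extFun (ρ : Measure (ℕ → A)) [IsProbabilityMeasure ρ] (n : ℕ) :
    ∑ w : Fin n → A, (ρ (Cyl n (extFun n w))).toReal = 1 := by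
  have h := measure_iUnion (μ := ρ) (pairwise_disjoint_cyl_extFun n)
    (fun w : Fin n → A => measurableSet_cyl n (extFun n w))
  rw [iUnion_cyl_extFun, measure_univ, tsum_fintype] at h
  have h2 := congrArg ENNReal.toReal h.symm
  rwa [ENNReal.toReal_sum (fun w _ => measure_ne_top ρ _), ENNReal.toReal_one] at h2



section Main

variable (g : ℕ → A → ℝ) (hg : ∀ (k : ℕ) (a : A), 0 < g k a)
  (hsum : Summable fun p : ℕ × ℕ => Lg g (p.1 + p.2))

include hg hsum

lemma lam_le (g0 : ℝ) (hg0 : 0 < g0) (μ ν : Measure (ℕ → A))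
    [IsProbabilityMeasure μ] [IsProbabilityMeasure ν]
    {lamμ lamν : ℝ} (hlamμ : 0 < lamμ) (hlamν : 0 < lamν)
    (hμ : IsConformalFor (fun x => g0 * ∏' i : ℕ, g i (x i)) lamμ μ)
    (hν : IsConformalFor (fun x => g0 * ∏' i : ℕ, g i (x i)) lamν ν) :
    lamμ ≤ lamν := by
  by_contra hlt
  push_neg at hlt
  set r := lamν / lamμ with hrdef
  have hr0 : 0 ≤ r := by positivity
  have hr1 : r < 1 := (div_lt_one hlamμ).2 hlt
  set E := Real.exp (2 * ∑' i, Tg g i) with hE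
  have h1 : ∀ n : ℕ, (1 : ℝ) ≤ r ^ n * E := by
    intro n
    have hEn : Real.exp (2 * ∑ m ∈ Finset.range n, Tg g (m + 1)) ≤ E :=
      Real.exp_le_exp.2 (by nlinarith [sum_le_tsum_Tg g hg hsum n])
    calc (1 : ℝ) = ∑ w : Fin n → A, (μ (Cyl n (extFun n w))).toReal :=
          (sum_cyl_extFun μ n).symm
      _ ≤ ∑ w : Fin n → A, r ^ n * Real.exp (2 * ∑ m ∈ Finset.range n, Tg g (m + 1)) *
            (ν (Cyl n (extFun n w))).toReal :=
          Finset.sum_le_sum fun w _ =>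
            ratio_le g hg hsum g0 hg0 μ ν hlamμ hlamν hμ hν n (extFun n w)
      _ = r ^ n * Real.exp (2 * ∑ m ∈ Finset.range n, Tg g (m + 1)) *
            ∑ w : Fin n → A, (ν (Cyl n (extFun n w))).toReal := by rw [← Finset.mul_sum]
      _ = r ^ n * Real.exp (2 * ∑ m ∈ Finset.range n, Tg g (m + 1)) := by
          rw [sum_cyl_extFun ν n, mul_one]
      _ ≤ r ^ n * E := mul_le_mul_of_nonneg_left hEn (pow_nonneg hr0 n)
  have htend : Tendsto (fun n : ℕ => r ^ n * E) atTop (nhds 0) := by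
    simpa using (tendsto_pow_atTop_nhds_zero_of_lt_one hr0 hr1).mul_const E
  obtain ⟨n, hn⟩ := (htend.eventually_lt_const one_pos).exists
  linarith [h1 n]

lemma tprod_Mg_sq : ∏' i : ℕ, ∏' j : ℕ, (Mg g (i + j)) ^ 2 =
    Real.exp (2 * ∑' i, Tg g i) := by
  have inner : ∀ i : ℕ, ∏' j : ℕ, (Mg g (i + j)) ^ 2 = Real.exp (2 * Tg g i) := by
    intro i
    have heq : (fun j => Real.log ((Mg g (i + j)) ^ 2)) = fun j => 2 * Lg g (i + j) := by
      funext j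
      rw [Real.log_pow]
      push_cast
      rfl
    have hs : Summable fun j => Real.log ((Mg g (i + j)) ^ 2) := by
      rw [heq]
      exact (summable_Lg_row g hg hsum i).mul_left 2
    have hp := hs.hasSum.rexp
    have he : (Real.exp ∘ fun j => Real.log ((Mg g (i + j)) ^ 2)) =
        fun j => (Mg g (i + j)) ^ 2 :=
      funext fun j => Real.exp_log (pow_pos (Mg_pos g hg (i + j)) 2)
    rw [he] at hp
    rw [hp.tprod_eq]
    congr 1
    calc ∑' j, Real.log ((Mg g (i + j)) ^ 2) = ∑' j, 2 * Lg g (i + j) := by rw [heq]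
      _ = 2 * Tg g i := tsum_mul_left
  calc ∏' i : ℕ, ∏' j : ℕ, (Mg g (i + j)) ^ 2 = ∏' i : ℕ, Real.exp (2 * Tg g i) :=
        tprod_congr inner
    _ = Real.exp (∑' i, 2 * Tg g i) :=
        (((summable_Tg g hg hsum).mul_left 2).hasSum.rexp).tprod_eq
    _ = Real.exp (2 * ∑' i, Tg g i) := by rw [tsum_mul_left]

lemma cyl_bound_final (g0 : ℝ) (hg0 : 0 < g0) (μ ν : Measure (ℕ → A))
    [IsProbabilityMeasure μ] [IsProbabilityMeasure ν]
    {lamμ lamν : ℝ} (hlamμ : 0 < lamμ) (hlamν : 0 < lamν)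
    (hμ : IsConformalFor (fun x => g0 * ∏' i : ℕ, g i (x i)) lamμ μ)
    (hν : IsConformalFor (fun x => g0 * ∏' i : ℕ, g i (x i)) lamν ν)
    (hlamEq : lamμ = lamν) (n : ℕ) (a : ℕ → A) :
    μ (Cyl n a) ≤ ENNReal.ofReal (∏' i : ℕ, ∏' j : ℕ, (Mg g (i + j)) ^ 2) * ν (Cyl n a) := by
  have h := ratio_le g hg hsum g0 hg0 μ ν hlamμ hlamν hμ hν n a
  have hr : lamν / lamμ = 1 := by rw [hlamEq]; exact div_self hlamν.ne'
  rw [hr, one_pow, one_mul] at h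
  have hEn : Real.exp (2 * ∑ m ∈ Finset.range n, Tg g (m + 1)) ≤
      Real.exp (2 * ∑' i, Tg g i) :=
    Real.exp_le_exp.2 (by nlinarith [sum_le_tsum_Tg g hg hsum n])
  have h2 : (μ (Cyl n a)).toReal ≤
      Real.exp (2 * ∑' i, Tg g i) * (ν (Cyl n a)).toReal :=
    h.trans (mul_le_mul_of_nonneg_right hEn ENNReal.toReal_nonneg)
  have h3 := ENNReal.ofReal_le_ofReal h2
  rw [ENNReal.ofReal_toReal (measure_ne_top μ _),
    ENNReal.ofReal_mul (Real.exp_pos _).le,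
    ENNReal.ofReal_toReal (measure_ne_top ν _)] at h3
  rw [tprod_Mg_sq g hg hsum]
  exact h3

end Main

lemma abscont (μ ν : Measure (ℕ → A)) [IsFiniteMeasure μ] [IsFiniteMeasure ν]
    (K' : ℝ≥0∞) (hK' : K' ≠ ⊤)
    (hcyl : ∀ (n : ℕ) (a : ℕ → A), μ (Cyl n a) ≤ K' * ν (Cyl n a)) : μ ≪ ν := by
  classical
  letI : TopologicalSpace A := ⊥
  haveI : DiscreteTopology A := ⟨rfl⟩
  haveI : BorelSpace A := inferInstance
  haveI : BorelSpace (ℕ → A) := Pi.borelSpace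
  haveI : ν.OuterRegular := inferInstance
  have hopen : ∀ U : Set (ℕ → A), IsOpen U → μ U ≤ K' * ν U := by
    intro U hU
    set F : (n : ℕ) → Finset (Fin n → A) :=
      fun n => Finset.univ.filter (fun w => Cyl n (extFun n w) ⊆ U) with hF
    set S : ℕ → Set (ℕ → A) := fun n => ⋃ w ∈ F n, Cyl n (extFun n w) with hS
    have hSiff : ∀ (n : ℕ) (x : ℕ → A), x ∈ S n ↔ Cyl n x ⊆ U := by
      intro n x
      constructor
      · intro hx
        rw [hS, Set.mem_iUnion₂] at hx
        obtain ⟨w, hw, hxw⟩ := hx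
        have hsub := (Finset.mem_filter.1 hw).2
        rwa [← cyl_eq_of_agree (n := n) (x := x) (y := extFun n w) hxw] at hsub
      · intro hx
        rw [hS, Set.mem_iUnion₂]
        have hagree : ∀ i < n, extFun n (fun i : Fin n => x i) i = x i := by
          intro i hi
          rw [extFun_spec n _ i hi]
        refine ⟨fun i => x i, Finset.mem_filter.2 ⟨Finset.mem_univ _, ?_⟩, ?_⟩
        · rw [cyl_eq_of_agree hagree]
          exact hx
        · intro i hi
          exact (hagree i hi).symm
    have hSU : ∀ n, S n ⊆ U := fun n x hx => ((hSiff n x).1 hx) (mem_cyl_self n x)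
    have hmono : Monotone S := by
      intro m n hmn x hx
      rw [hSiff] at hx ⊢
      exact fun y hy => hx fun i hi => hy i (lt_of_lt_of_le hi hmn)
    have hUeq : U = ⋃ n, S n := by
      apply Set.Subset.antisymm
      · intro x hx
        obtain ⟨I, u, hIu, hpi⟩ := isOpen_pi_iff.1 hU x hx
        refine Set.mem_iUnion.2 ⟨I.sup id + 1, (hSiff _ x).2 fun y hy => ?_⟩
        refine hpi fun i hi => ?_
        have hyx : y i = x i :=
          hy i (lt_of_le_of_lt (Finset.le_sup (f := id) hi) (Nat.lt_succ_self _))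
        rw [hyx]
        exact (hIu i hi).2
      · exact Set.iUnion_subset hSU
    have hSbound : ∀ n, μ (S n) ≤ K' * ν (S n) := by
      intro n
      have hdisj : (↑(F n) : Set (Fin n → A)).PairwiseDisjoint
          fun w => Cyl n (extFun n w) :=
        fun w _ w' _ hww' => pairwise_disjoint_cyl_extFun n hww'
      rw [hS]
      rw [measure_biUnion_finset hdisj (fun w _ => measurableSet_cyl _ _),
        measure_biUnion_finset hdisj (fun w _ => measurableSet_cyl _ _), Finset.mul_sum]
      exact Finset.sum_le_sum fun w _ => hcyl n (extFun n w)
    calc μ U = ⨆ n, μ (S n) := by rw [hUeq, Directed.measure_iUnion hmono.directed_le]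
      _ ≤ K' * ν U := by
          refine iSup_le fun n => (hSbound n).trans ?_
          exact mul_le_mul_right (measure_mono (hSU n)) _
  refine Measure.AbsolutelyContinuous.mk fun s hs hνs => ?_
  refine le_antisymm ?_ zero_le
  have hball : ∀ ε : ℝ≥0∞, 0 < ε → μ s ≤ K' * ε := by
    intro ε hε
    obtain ⟨U, hsU, hUopen, hUν⟩ := Set.exists_isOpen_lt_of_lt s ε (by rw [hνs]; exact hε)
    exact (measure_mono hsU).trans ((hopen U hUopen).trans (mul_le_mul_right hUν.le K'))
  by_cases hK0 : K' = 0
  · simpa [hK0] using hball 1 one_pos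
  · refine ENNReal.le_of_forall_pos_le_add fun ε hε _ => ?_
    have hεd : (0 : ℝ≥0∞) < (ε : ℝ≥0∞) / K' :=
      ENNReal.div_pos (by exact_mod_cast hε.ne') hK'
    have := hball _ hεd
    rw [ENNReal.mul_div_cancel hK0 hK'] at this
    rwa [zero_add]

end Stmt8Aux

/-- Under the double summability condition, any two conformal probability
measures `μ`, `ν` for the product-type potential `g = g0 ∏ g_i` satisfy
`K⁻¹ ≤ μ([a_1,…,a_n])/ν([a_1,…,a_n]) ≤ K` on all cylinders, where `K = ∏_i K_i` and
`K_i = ∏_{k≥i} max{‖g_k‖_∞², ‖g_k⁻¹‖_∞²}`; in particular `μ` and `ν` are equivalent. -/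
theorem stmt_8 {A : Type*} [Fintype A] [Nonempty A] [MeasurableSpace A]
    [MeasurableSingletonClass A]
    (g0 : ℝ) (hg0 : 0 < g0) (g : ℕ → A → ℝ) (hg : ∀ (k : ℕ) (a : A), 0 < g k a)
    (hsum : Summable fun p : ℕ × ℕ =>
      Real.log (⨆ a : A, max (g (p.1 + p.2) a) (g (p.1 + p.2) a)⁻¹))
    (μ ν : Measure (ℕ → A)) (hμp : IsProbabilityMeasure μ) (hνp : IsProbabilityMeasure ν)
    (lamμ lamν : ℝ) (hlamμ : 0 < lamμ) (hlamν : 0 < lamν)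
    (hμ : IsConformalFor (fun x => g0 * ∏' i : ℕ, g i (x i)) lamμ μ)
    (hν : IsConformalFor (fun x => g0 * ∏' i : ℕ, g i (x i)) lamν ν) :
    (∀ (n : ℕ) (a : ℕ → A),
      μ {x : ℕ → A | ∀ i < n, x i = a i} ≤
          ENNReal.ofReal (∏' i : ℕ, ∏' j : ℕ,
              (⨆ b : A, max (g (i + j) b) (g (i + j) b)⁻¹) ^ 2) *
            ν {x : ℕ → A | ∀ i < n, x i = a i} ∧
      ν {x : ℕ → A | ∀ i < n, x i = a i} ≤
          ENNReal.ofReal (∏' i : ℕ, ∏' j : ℕ,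
              (⨆ b : A, max (g (i + j) b) (g (i + j) b)⁻¹) ^ 2) *
            μ {x : ℕ → A | ∀ i < n, x i = a i}) ∧
    μ ≪ ν ∧ ν ≪ μ := by
  haveI := hμp
  haveI := hνp
  have hsum' : Summable fun p : ℕ × ℕ => Stmt8Aux.Lg g (p.1 + p.2) := hsum
  have hlamEq : lamμ = lamν :=
    le_antisymm
      (Stmt8Aux.lam_le g hg hsum' g0 hg0 μ ν hlamμ hlamν hμ hν)
      (Stmt8Aux.lam_le g hg hsum' g0 hg0 ν μ hlamν hlamμ hν hμ)
  have h1 : ∀ (n : ℕ) (a : ℕ → A), μ (Stmt8Aux.Cyl n a) ≤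
      ENNReal.ofReal (∏' i : ℕ, ∏' j : ℕ, (Stmt8Aux.Mg g (i + j)) ^ 2) *
        ν (Stmt8Aux.Cyl n a) :=
    fun n a => Stmt8Aux.cyl_bound_final g hg hsum' g0 hg0 μ ν hlamμ hlamν hμ hν hlamEq n a
  have h2 : ∀ (n : ℕ) (a : ℕ → A), ν (Stmt8Aux.Cyl n a) ≤
      ENNReal.ofReal (∏' i : ℕ, ∏' j : ℕ, (Stmt8Aux.Mg g (i + j)) ^ 2) *
        μ (Stmt8Aux.Cyl n a) :=
    fun n a => Stmt8Aux.cyl_bound_final g hg hsum' g0 hg0 ν μ hlamν hlamμ hν hμ hlamEq.symm n a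
  refine ⟨fun n a => ⟨h1 n a, h2 n a⟩, ?_, ?_⟩
  · exact Stmt8Aux.abscont μ ν _ ENNReal.ofReal_ne_top h1
  · exact Stmt8Aux.abscont ν μ _ ENNReal.ofReal_ne_top h2
end

section
/- Any conformal measure ν which is positive on open sets, for a potential g of product type on finite alphabet A^ℕ, is ergodic: if A is a Borel set with T^{−1}(A) = A then ν(A) ∈ {0, 1}, given that any two such conformal measures are equivalent. -/
open MeasureTheory

open ProbabilityTheory in
theorem cond_def {Ω : Type*} [MeasurableSpace Ω] (μ : MeasureTheory.Measure Ω) (s : Set Ω) :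
    μ[|s] = (μ s)⁻¹ • μ.restrict s := rfl

namespace Stmt9Aux
open ProbabilityTheory ENNReal

variable {A : Type*}

/-- Cylinder of length `n` around `x`. -/
def Cyl (x : ℕ → A) (n : ℕ) : Set (ℕ → A) := {y | ∀ i < n, y i = x i}

lemma cyl_zero (x : ℕ → A) : Cyl x 0 = Set.univ := by
  ext y; simp [Cyl]

lemma measurableSet_cyl [MeasurableSpace A] [MeasurableSingletonClass A]
    (x : ℕ → A) (n : ℕ) : MeasurableSet (Cyl x n) := by
  have : Cyl x n = ⋂ i ∈ Finset.range n, (fun y : ℕ → A => y i) ⁻¹' {x i} := by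
    ext y; simp [Cyl]
  rw [this]
  exact MeasurableSet.biInter (Set.to_countable _)
    (fun i _ => (measurable_pi_apply i) (measurableSet_singleton (x i)))

lemma injOn_cyl (x : ℕ → A) (n : ℕ) :
    Set.InjOn (shiftMap A) (Cyl x (n + 1)) := by
  intro a ha b hb h
  funext i
  cases i with
  | zero => exact (ha 0 (Nat.succ_pos n)).trans (hb 0 (Nat.succ_pos n)).symm
  | succ k => exact congrFun h k

lemma image_cyl (x : ℕ → A) (n : ℕ) :
    shiftMap A '' Cyl x (n + 1) = Cyl (shiftMap A x) n := by
  ext y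
  constructor
  · rintro ⟨z, hz, rfl⟩ i hi
    exact hz (i + 1) (Nat.succ_lt_succ hi)
  · intro hy
    refine ⟨fun i => Nat.rec (x 0) (fun k _ => y k) i, ?_, ?_⟩
    · intro i hi
      cases i with
      | zero => rfl
      | succ k => exact hy k (Nat.lt_of_succ_lt_succ hi)
    · funext i; rfl

/-- Key lemma: if a conformal measure kills some cylinder intersected with an
invariant set `s`, it kills `s`. -/
lemma null_of_cyl_null [MeasurableSpace A] [MeasurableSingletonClass A]
    {G : (ℕ → A) → ℝ} {lam : ℝ} {ν : Measure (ℕ → A)}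
    (hν : IsConformalFor G lam ν) {s : Set (ℕ → A)} (hsm : MeasurableSet s)
    (hs : shiftMap A ⁻¹' s = s) :
    ∀ n (x : ℕ → A), ν (Cyl x n ∩ s) = 0 → ν s = 0 := by
  intro n
  induction n with
  | zero => intro x h; rwa [cyl_zero, Set.univ_inter] at h
  | succ n ih =>
    intro x h
    have himg : shiftMap A '' (Cyl x (n + 1) ∩ s) = Cyl (shiftMap A x) n ∩ s := by
      conv_lhs => rw [show Cyl x (n + 1) ∩ s = Cyl x (n + 1) ∩ shiftMap A ⁻¹' s from by
        rw [hs]]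
      rw [Set.image_inter_preimage, image_cyl]
    have hconf := hν (Cyl x (n + 1) ∩ s) ((measurableSet_cyl x (n + 1)).inter hsm)
      ((injOn_cyl x n).mono Set.inter_subset_left)
    rw [himg, setIntegral_measure_zero _ h, mul_zero, ENNReal.ofReal_zero] at hconf
    exact ih (shiftMap A x) hconf

/-- A nonempty open set contains a cylinder. -/
lemma exists_cyl_subset [TopologicalSpace A] [DiscreteTopology A]
    {U : Set (ℕ → A)} (hU : IsOpen U) {x : ℕ → A} (hx : x ∈ U) :
    ∃ n, Cyl x n ⊆ U := by
  obtain ⟨I, u, hu, hsub⟩ := isOpen_pi_iff.mp hU x hx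
  refine ⟨I.sup id + 1, fun y hy => hsub ?_⟩
  intro i hi
  have : y i = x i := hy i (Nat.lt_succ_of_le (Finset.le_sup (f := id) hi))
  rw [this]
  exact (hu i hi).2

/-- The conditional measure on an invariant set is conformal. -/
lemma cond_conformal [MeasurableSpace A]
    {G : (ℕ → A) → ℝ} {lam : ℝ} {ν : Measure (ℕ → A)} [IsFiniteMeasure ν]
    (hν : IsConformalFor G lam ν) {s : Set (ℕ → A)} (hsm : MeasurableSet s)
    (hs : shiftMap A ⁻¹' s = s) (h0 : ν s ≠ 0) :
    IsConformalFor G lam (ν[|s]) := by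
  intro C hC hinj
  have hne : (ν s)⁻¹ ≠ ∞ := ENNReal.inv_ne_top.mpr h0
  have himg : s ∩ shiftMap A '' C = shiftMap A '' (C ∩ s) := by
    conv_rhs => rw [show C ∩ s = C ∩ shiftMap A ⁻¹' s from by rw [hs]]
    rw [Set.image_inter_preimage, Set.inter_comm]
  have hint : ∫ x in C, G x ∂(ν[|s]) = ((ν s)⁻¹).toReal * ∫ x in C ∩ s, G x ∂ν := by
    rw [cond_def, Measure.restrict_smul, integral_smul_measure,
      Measure.restrict_restrict hC, smul_eq_mul]
  rw [ProbabilityTheory.cond_apply hsm, himg,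
    hν (C ∩ s) (hC.inter hsm) (hinj.mono Set.inter_subset_left), hint]
  set I := ∫ x in C ∩ s, G x ∂ν with hI
  rcases le_or_gt 0 (lam * I) with hge | hlt
  · rw [show lam * (((ν s)⁻¹).toReal * I) = ((ν s)⁻¹).toReal * (lam * I) from by ring,
      ENNReal.ofReal_mul ENNReal.toReal_nonneg, ENNReal.ofReal_toReal hne]
  · rw [ENNReal.ofReal_of_nonpos hlt.le, mul_zero, ENNReal.ofReal_of_nonpos]
    nlinarith [ENNReal.toReal_nonneg (a := (ν s)⁻¹)]

end Stmt9Aux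

open ProbabilityTheory Stmt9Aux in
/-- Any conformal probability measure `ν`, positive on open sets, for a
potential `g` of product type on a finite alphabet, is ergodic (invariant Borel sets have
measure `0` or `1`), given that any two such conformal measures are equivalent. -/
theorem stmt_9 {A : Type*} [Fintype A] [Nonempty A] [MeasurableSpace A]
    [MeasurableSingletonClass A] [TopologicalSpace A] [DiscreteTopology A]
    (g0 : ℝ) (hg0 : 0 < g0) (g : ℕ → A → ℝ) (hg : ∀ (k : ℕ) (a : A), 0 < g k a)
    (heqv : ∀ (ν₁ ν₂ : Measure (ℕ → A)) (lam₁ lam₂ : ℝ),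
      IsProbabilityMeasure ν₁ → IsProbabilityMeasure ν₂ → 0 < lam₁ → 0 < lam₂ →
      IsConformalFor (fun x => g0 * ∏' i : ℕ, g i (x i)) lam₁ ν₁ →
      IsConformalFor (fun x => g0 * ∏' i : ℕ, g i (x i)) lam₂ ν₂ →
      (∀ U : Set (ℕ → A), IsOpen U → U.Nonempty → 0 < ν₁ U) →
      (∀ U : Set (ℕ → A), IsOpen U → U.Nonempty → 0 < ν₂ U) →
      ν₁ ≪ ν₂)
    (ν : Measure (ℕ → A)) (hνp : IsProbabilityMeasure ν)
    (lam : ℝ) (hlam : 0 < lam)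
    (hν : IsConformalFor (fun x => g0 * ∏' i : ℕ, g i (x i)) lam ν)
    (hpos : ∀ U : Set (ℕ → A), IsOpen U → U.Nonempty → 0 < ν U) :
    ∀ s : Set (ℕ → A), MeasurableSet s → shiftMap A ⁻¹' s = s →
      ν s = 0 ∨ ν s = 1 := by
  intro s hsm hsinv
  by_contra hcon
  push_neg at hcon
  obtain ⟨h0, h1⟩ := hcon
  have hscm : MeasurableSet sᶜ := hsm.compl
  have hscinv : shiftMap A ⁻¹' sᶜ = sᶜ := by rw [Set.preimage_compl, hsinv]
  have hc0 : ν sᶜ ≠ 0 := fun h => h1 ((prob_compl_eq_zero_iff hsm).mp h)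
  -- positivity of conditional measures on open sets
  have pos : ∀ s' : Set (ℕ → A), MeasurableSet s' → shiftMap A ⁻¹' s' = s' → ν s' ≠ 0 →
      ∀ U : Set (ℕ → A), IsOpen U → U.Nonempty → 0 < (ν[|s']) U := by
    rintro s' hm hinv hne U hU ⟨x, hx⟩
    rw [ProbabilityTheory.cond_apply hm]
    have hU1 : ν (s' ∩ U) ≠ 0 := by
      intro h
      obtain ⟨n, hn⟩ := exists_cyl_subset hU hx
      refine hne (null_of_cyl_null hν hm hinv n x (measure_mono_null ?_ h))
      exact fun y hy => ⟨hy.2, hn hy.1⟩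
    have hU2 : (ν s')⁻¹ ≠ 0 := ENNReal.inv_ne_zero.mpr (measure_ne_top ν s')
    exact pos_iff_ne_zero.mpr (mul_ne_zero hU2 hU1)
  have hp1 : IsProbabilityMeasure (ν[|s]) := cond_isProbabilityMeasure h0
  have hp2 : IsProbabilityMeasure (ν[|sᶜ]) := cond_isProbabilityMeasure hc0
  have hconf1 := cond_conformal (G := fun x => g0 * ∏' i : ℕ, g i (x i)) hν hsm hsinv h0
  have hconf2 := cond_conformal (G := fun x => g0 * ∏' i : ℕ, g i (x i)) hν hscm hscinv hc0
  have hac := heqv (ν[|s]) (ν[|sᶜ]) lam lam hp1 hp2 hlam hlam hconf1 hconf2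
    (pos s hsm hsinv h0) (pos sᶜ hscm hscinv hc0)
  have h2s : (ν[|sᶜ]) s = 0 := by
    rw [ProbabilityTheory.cond_apply hscm, Set.compl_inter_self, measure_empty, mul_zero]
  have := hac h2s
  rw [ProbabilityTheory.cond_apply hsm, Set.inter_self,
    ENNReal.inv_mul_cancel h0 (measure_ne_top ν s)] at this
  exact one_ne_zero this
end

section
/- Let g be a summable, ℓ1-bounded potential of product type on A^ℕ with A finite. Then the topological pressure P(log g) = lim_n (1/n) log Σ_{w∈A^n} sup_{x∈[w]} Π_{i=0}^{n−1} g(T^i x) equals log λ, where λ = g_0 Σ_{a∈A} Π_{i=1}^∞ g_i(a). -/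
open Real Filter Finset Topology

private lemma tprod_eq_exp_tsum_log {f : ℕ → ℝ} (hf : ∀ i, 0 < f i)
    (h : Summable fun i => Real.log (f i)) :
    ∏' i, f i = Real.exp (∑' i, Real.log (f i)) := by
  have hp : HasProd f (Real.exp (∑' i, Real.log (f i))) :=
    h.hasSum.rexp.congr_fun fun i => (Real.exp_log (hf i)).symm
  exact hp.tprod_eq

private lemma abs_tsum_le_tsum {f b : ℕ → ℝ} (hb : Summable b) (h : ∀ i, |f i| ≤ b i) :
    |∑' i, f i| ≤ ∑' i, b i := by
  have habs : Summable fun i => |f i| := hb.of_nonneg_of_le (fun i => abs_nonneg _) h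
  have h1 : ‖∑' i, f i‖ ≤ ∑' i, ‖f i‖ :=
    norm_tsum_le_tsum_norm (by simpa only [Real.norm_eq_abs] using habs)
  simp only [Real.norm_eq_abs] at h1
  calc |∑' i, f i| ≤ ∑' i, |f i| := h1
    _ ≤ ∑' i, b i := Summable.tsum_le_tsum h habs hb

private lemma sum_reindex (f : ℕ → ℕ → ℝ) (n : ℕ) :
    ∑ j ∈ range n, ∑ i ∈ range (n - j), f i (i + j)
      = ∑ m ∈ range n, ∑ i ∈ range (m + 1), f i m := by
  rw [Finset.sum_sigma', Finset.sum_sigma']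
  refine Finset.sum_nbij' (i := fun p => ⟨p.2 + p.1, p.2⟩) (j := fun p => ⟨p.1 - p.2, p.2⟩)
    ?_ ?_ ?_ ?_ ?_
  · rintro ⟨j, i⟩ hm
    simp only [mem_sigma, mem_range] at hm ⊢
    omega
  · rintro ⟨m, i⟩ hm
    simp only [mem_sigma, mem_range] at hm ⊢
    omega
  · rintro ⟨j, i⟩ hm
    dsimp only
    rw [Nat.add_sub_cancel_left]
  · rintro ⟨m, i⟩ hm
    simp only [mem_sigma, mem_range] at hm
    dsimp only
    have h : i + (m - i) = m := by omega
    rw [h]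
  · rintro ⟨j, i⟩ _
    rfl

private lemma main_bound {A : Type*} [Fintype A] [Nonempty A] (g0 : ℝ) (hg0 : 0 < g0)
    (g : ℕ → A → ℝ) (hg : ∀ (k : ℕ) (a : A), 0 < g k a)
    (v : ℕ → ℝ) (hv : ∀ (k : ℕ) (a : A), |Real.log (g (k + 1) a)| ≤ v k)
    (hl1 : Summable v) (n : ℕ) :
    |Real.log (∑ w : Fin n → A,
          ⨆ x : {x : ℕ → A // ∀ i : Fin n, x i = w i},
            ∏ j ∈ Finset.range n, (g0 * ∏' i : ℕ, g i (x.1 (i + j))))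
      - ((n : ℝ) * Real.log g0
          + ∑ m ∈ range n, Real.log (∑ a : A, Real.exp (∑ i ∈ range (m + 1), Real.log (g i a))))|
      ≤ ∑ d ∈ range n, ∑' i, v (i + d) := by
  classical
  have hsum : ∀ y : ℕ → A, Summable fun i => Real.log (g i (y i)) := by
    intro y
    have h1 : Summable fun i => Real.log (g (i + 1) (y (i + 1))) :=
      Summable.of_norm_bounded hl1
        (fun i => by simpa [Real.norm_eq_abs] using hv i (y (i + 1)))
    exact (summable_nat_add_iff 1).mp h1
  have hne : ∀ w : Fin n → A, Nonempty {x : ℕ → A // ∀ i : Fin n, x i = w i} := by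
    intro w
    exact ⟨⟨fun m => if h : m < n then w ⟨m, h⟩ else Classical.arbitrary A,
      fun i => by simp [i.isLt]⟩⟩
  have hvsum : ∀ d : ℕ, Summable fun i => v (i + d) := fun d => (summable_nat_add_iff d).mpr hl1
  -- Step A+B : exact value of the Birkhoff product
  have hF : ∀ x : ℕ → A,
      ∏ j ∈ range n, (g0 * ∏' i : ℕ, g i (x (i + j)))
        = Real.exp ((n:ℝ) * Real.log g0
            + ((∑ m ∈ range n, ∑ i ∈ range (m + 1), Real.log (g i (x m)))
               + ∑ j ∈ range n, ∑' i, Real.log (g (i + (n - j)) (x (i + n))))) := by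
    intro x
    have hfac : ∀ j : ℕ, g0 * ∏' i : ℕ, g i (x (i + j))
        = Real.exp (Real.log g0 + ∑' i, Real.log (g i (x (i + j)))) := by
      intro j
      rw [Real.exp_add, Real.exp_log hg0,
        tprod_eq_exp_tsum_log (fun i => hg i _) (hsum fun i => x (i + j))]
    have hsplit : ∀ j ∈ range n,
        (∑' i, Real.log (g i (x (i + j))))
          = (∑ i ∈ range (n - j), Real.log (g i (x (i + j))))
            + ∑' i, Real.log (g (i + (n - j)) (x (i + n))) := by
      intro j hj
      rw [mem_range] at hj
      have h1 := (Summable.sum_add_tsum_nat_add (f := fun i => Real.log (g i (x (i + j)))) (n - j)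
        (hsum fun i => x (i + j))).symm
      rw [h1]
      congr 1
      refine tsum_congr fun i => ?_
      have h2 : i + (n - j) + j = i + n := by omega
      rw [h2]
    calc ∏ j ∈ range n, (g0 * ∏' i : ℕ, g i (x (i + j)))
        = ∏ j ∈ range n, Real.exp (Real.log g0 + ∑' i, Real.log (g i (x (i + j)))) :=
          Finset.prod_congr rfl fun j _ => hfac j
      _ = Real.exp (∑ j ∈ range n, (Real.log g0 + ∑' i, Real.log (g i (x (i + j))))) :=
          (Real.exp_sum _ _).symm
      _ = _ := by
          rw [Finset.sum_add_distrib, Finset.sum_const, card_range, nsmul_eq_mul,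
            Finset.sum_congr rfl hsplit, Finset.sum_add_distrib,
            sum_reindex (fun i m => Real.log (g i (x m))) n]
  -- Step C : remainder bound
  have hR : ∀ x : ℕ → A,
      |∑ j ∈ range n, ∑' i, Real.log (g (i + (n - j)) (x (i + n)))|
        ≤ ∑ d ∈ range n, ∑' i, v (i + d) := by
    intro x
    calc |∑ j ∈ range n, ∑' i, Real.log (g (i + (n - j)) (x (i + n)))|
        ≤ ∑ j ∈ range n, |∑' i, Real.log (g (i + (n - j)) (x (i + n)))| :=
          Finset.abs_sum_le_sum_abs _ _
      _ ≤ ∑ j ∈ range n, ∑' i, v (i + (n - 1 - j)) := by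
          refine Finset.sum_le_sum fun j hj => ?_
          rw [mem_range] at hj
          refine abs_tsum_le_tsum (hvsum (n - 1 - j)) fun i => ?_
          have h2 : i + (n - j) = (i + (n - 1 - j)) + 1 := by omega
          rw [h2]
          exact hv _ _
      _ = ∑ d ∈ range n, ∑' i, v (i + d) :=
          Finset.sum_range_reflect (fun d => ∑' i, v (i + d)) n
  -- head value depends only on the word
  have hD : ∀ (w : Fin n → A) (x : {x : ℕ → A // ∀ i : Fin n, x i = w i}),
      (∑ m ∈ range n, ∑ i ∈ range (m + 1), Real.log (g i (x.1 m)))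
        = ∑ m : Fin n, ∑ i ∈ range ((m : ℕ) + 1), Real.log (g i (w m)) := by
    intro w x
    rw [← Fin.sum_univ_eq_sum_range (fun m => ∑ i ∈ range (m + 1), Real.log (g i (x.1 m))) n]
    exact Fintype.sum_congr _ _ fun m => by rw [x.2 m]
  -- sup bounds over each cylinder
  have hsup : ∀ w : Fin n → A,
      Real.exp (((n:ℝ) * Real.log g0 - ∑ d ∈ range n, ∑' i, v (i + d))
          + ∑ m : Fin n, ∑ i ∈ range ((m : ℕ) + 1), Real.log (g i (w m)))
        ≤ (⨆ x : {x : ℕ → A // ∀ i : Fin n, x i = w i},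
            ∏ j ∈ range n, (g0 * ∏' i : ℕ, g i (x.1 (i + j))))
      ∧ (⨆ x : {x : ℕ → A // ∀ i : Fin n, x i = w i},
            ∏ j ∈ range n, (g0 * ∏' i : ℕ, g i (x.1 (i + j))))
          ≤ Real.exp (((n:ℝ) * Real.log g0 + ∑ d ∈ range n, ∑' i, v (i + d))
              + ∑ m : Fin n, ∑ i ∈ range ((m : ℕ) + 1), Real.log (g i (w m))) := by
    intro w
    haveI := hne w
    have hub : ∀ x : {x : ℕ → A // ∀ i : Fin n, x i = w i},
        ∏ j ∈ range n, (g0 * ∏' i : ℕ, g i (x.1 (i + j)))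
          ≤ Real.exp (((n:ℝ) * Real.log g0 + ∑ d ∈ range n, ∑' i, v (i + d))
              + ∑ m : Fin n, ∑ i ∈ range ((m : ℕ) + 1), Real.log (g i (w m))) := by
      intro x
      rw [hF x.1, ← hD w x]
      refine Real.exp_le_exp.mpr ?_
      have h3 := (abs_le.mp (hR x.1)).2
      linarith
    have hlb : ∀ x : {x : ℕ → A // ∀ i : Fin n, x i = w i},
        Real.exp (((n:ℝ) * Real.log g0 - ∑ d ∈ range n, ∑' i, v (i + d))
            + ∑ m : Fin n, ∑ i ∈ range ((m : ℕ) + 1), Real.log (g i (w m)))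
          ≤ ∏ j ∈ range n, (g0 * ∏' i : ℕ, g i (x.1 (i + j))) := by
      intro x
      rw [hF x.1, ← hD w x]
      refine Real.exp_le_exp.mpr ?_
      have h3 := (abs_le.mp (hR x.1)).1
      linarith
    have hbdd : BddAbove (Set.range fun x : {x : ℕ → A // ∀ i : Fin n, x i = w i} =>
        ∏ j ∈ range n, (g0 * ∏' i : ℕ, g i (x.1 (i + j)))) := by
      refine ⟨Real.exp (((n:ℝ) * Real.log g0 + ∑ d ∈ range n, ∑' i, v (i + d))
          + ∑ m : Fin n, ∑ i ∈ range ((m : ℕ) + 1), Real.log (g i (w m))), ?_⟩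
      rintro _ ⟨x, rfl⟩
      exact hub x
    exact ⟨le_ciSup_of_le hbdd (Classical.arbitrary _) (hlb _), ciSup_le hub⟩
  -- summing the word weights
  have hsum1 : (∑ w : Fin n → A,
        Real.exp (∑ m : Fin n, ∑ i ∈ range ((m : ℕ) + 1), Real.log (g i (w m))))
      = ∏ m ∈ range n, ∑ a : A, Real.exp (∑ i ∈ range (m + 1), Real.log (g i a)) := by
    have h2 := Finset.prod_univ_sum (fun _ : Fin n => (univ : Finset A))
      (fun m a => Real.exp (∑ i ∈ range ((m : ℕ) + 1), Real.log (g i a)))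
    rw [Fintype.piFinset_univ] at h2
    calc ∑ w : Fin n → A,
          Real.exp (∑ m : Fin n, ∑ i ∈ range ((m : ℕ) + 1), Real.log (g i (w m)))
        = ∑ w : Fin n → A,
            ∏ m : Fin n, Real.exp (∑ i ∈ range ((m : ℕ) + 1), Real.log (g i (w m))) :=
          Finset.sum_congr rfl fun w _ => Real.exp_sum _ _
      _ = ∏ m : Fin n, ∑ a : A, Real.exp (∑ i ∈ range ((m : ℕ) + 1), Real.log (g i a)) :=
          h2.symm
      _ = ∏ m ∈ range n, ∑ a : A, Real.exp (∑ i ∈ range (m + 1), Real.log (g i a)) :=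
          Fin.prod_univ_eq_prod_range
            (fun m => ∑ a : A, Real.exp (∑ i ∈ range (m + 1), Real.log (g i a))) n
  have hQmpos : ∀ m : ℕ, (0:ℝ) < ∑ a : A, Real.exp (∑ i ∈ range (m + 1), Real.log (g i a)) :=
    fun m => Finset.sum_pos (fun a _ => Real.exp_pos _) univ_nonempty
  have hPpos : (0:ℝ) < ∏ m ∈ range n, ∑ a : A, Real.exp (∑ i ∈ range (m + 1), Real.log (g i a)) :=
    Finset.prod_pos fun m _ => hQmpos m
  -- bounds on the full sum
  have hlow : Real.exp ((n:ℝ) * Real.log g0 - ∑ d ∈ range n, ∑' i, v (i + d))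
        * ∏ m ∈ range n, ∑ a : A, Real.exp (∑ i ∈ range (m + 1), Real.log (g i a))
      ≤ ∑ w : Fin n → A, ⨆ x : {x : ℕ → A // ∀ i : Fin n, x i = w i},
          ∏ j ∈ range n, (g0 * ∏' i : ℕ, g i (x.1 (i + j))) := by
    calc Real.exp ((n:ℝ) * Real.log g0 - ∑ d ∈ range n, ∑' i, v (i + d))
          * ∏ m ∈ range n, ∑ a : A, Real.exp (∑ i ∈ range (m + 1), Real.log (g i a))
        = ∑ w : Fin n → A, Real.exp (((n:ℝ) * Real.log g0 - ∑ d ∈ range n, ∑' i, v (i + d))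
            + ∑ m : Fin n, ∑ i ∈ range ((m : ℕ) + 1), Real.log (g i (w m))) := by
          rw [← hsum1, mul_sum]
          exact Finset.sum_congr rfl fun w _ => (Real.exp_add _ _).symm
      _ ≤ _ := Finset.sum_le_sum fun w _ => (hsup w).1
  have hhigh : (∑ w : Fin n → A, ⨆ x : {x : ℕ → A // ∀ i : Fin n, x i = w i},
          ∏ j ∈ range n, (g0 * ∏' i : ℕ, g i (x.1 (i + j))))
      ≤ Real.exp ((n:ℝ) * Real.log g0 + ∑ d ∈ range n, ∑' i, v (i + d))
        * ∏ m ∈ range n, ∑ a : A, Real.exp (∑ i ∈ range (m + 1), Real.log (g i a)) := by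
    calc (∑ w : Fin n → A, ⨆ x : {x : ℕ → A // ∀ i : Fin n, x i = w i},
            ∏ j ∈ range n, (g0 * ∏' i : ℕ, g i (x.1 (i + j))))
        ≤ ∑ w : Fin n → A, Real.exp (((n:ℝ) * Real.log g0 + ∑ d ∈ range n, ∑' i, v (i + d))
            + ∑ m : Fin n, ∑ i ∈ range ((m : ℕ) + 1), Real.log (g i (w m))) :=
          Finset.sum_le_sum fun w _ => (hsup w).2
      _ = _ := by
          rw [← hsum1, mul_sum]
          exact Finset.sum_congr rfl fun w _ => Real.exp_add _ _
  have hSpos : (0:ℝ) < ∑ w : Fin n → A, ⨆ x : {x : ℕ → A // ∀ i : Fin n, x i = w i},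
      ∏ j ∈ range n, (g0 * ∏' i : ℕ, g i (x.1 (i + j))) :=
    lt_of_lt_of_le (by positivity) hlow
  have hlogP : Real.log (∏ m ∈ range n, ∑ a : A,
        Real.exp (∑ i ∈ range (m + 1), Real.log (g i a)))
      = ∑ m ∈ range n, Real.log (∑ a : A, Real.exp (∑ i ∈ range (m + 1), Real.log (g i a))) :=
    Real.log_prod fun m _ => (hQmpos m).ne'
  have l1 := Real.log_le_log hSpos hhigh
  rw [Real.log_mul (Real.exp_ne_zero _) hPpos.ne', Real.log_exp, hlogP] at l1
  have l2 := Real.log_le_log (by positivity) hlow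
  rw [Real.log_mul (Real.exp_ne_zero _) hPpos.ne', Real.log_exp, hlogP] at l2
  rw [abs_le]
  constructor <;> [linarith; linarith]
/-- For a summable, ℓ1-bounded potential of product type
`g(x) = g0 ∏_k g_k(x_k)` on a finite alphabet, the topological pressure
`P(log g) = lim_n (1/n) log ∑_{w ∈ A^n} sup_{x ∈ [w]} ∏_{i<n} g(T^i x)` equals
`log λ` with `λ = g0 ∑_a ∏_i g_i(a)`. -/
theorem stmt_14 {A : Type*} [Fintype A] [Nonempty A]
    (g0 : ℝ) (hg0 : 0 < g0) (g : ℕ → A → ℝ) (hg : ∀ (k : ℕ) (a : A), 0 < g k a)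
    (v : ℕ → ℝ) (hv : ∀ (k : ℕ) (a : A), |Real.log (g (k + 1) a)| ≤ v k)
    (hl1 : Summable v) :
    Filter.Tendsto (fun n : ℕ =>
        Real.log (∑ w : Fin n → A,
          ⨆ x : {x : ℕ → A // ∀ i : Fin n, x i = w i},
            ∏ j ∈ Finset.range n, (g0 * ∏' i : ℕ, g i (x.1 (i + j)))) / (n : ℝ))
      Filter.atTop (nhds (Real.log (g0 * ∑ a : A, ∏' k : ℕ, g k a))) := by
  classical
  have hsum : ∀ y : ℕ → A, Summable fun i => Real.log (g i (y i)) := by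
    intro y
    have h1 : Summable fun i => Real.log (g (i + 1) (y (i + 1))) :=
      Summable.of_norm_bounded hl1
        (fun i => by simpa [Real.norm_eq_abs] using hv i (y (i + 1)))
    exact (summable_nat_add_iff 1).mp h1
  have hQpos : (0:ℝ) < ∑ a : A, Real.exp (∑' i, Real.log (g i a)) :=
    Finset.sum_pos (fun a _ => Real.exp_pos _) univ_nonempty
  have hc : Tendsto
      (fun m : ℕ => Real.log (∑ a : A, Real.exp (∑ i ∈ range (m + 1), Real.log (g i a))))
      atTop (𝓝 (Real.log (∑ a : A, Real.exp (∑' i, Real.log (g i a))))) := by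
    have h2 : Tendsto (fun m : ℕ => ∑ a : A, Real.exp (∑ i ∈ range (m + 1), Real.log (g i a)))
        atTop (𝓝 (∑ a : A, Real.exp (∑' i, Real.log (g i a)))) := by
      apply tendsto_finset_sum
      intro a _
      have h1 : Tendsto (fun m : ℕ => ∑ i ∈ range (m + 1), Real.log (g i a)) atTop
          (𝓝 (∑' i, Real.log (g i a))) :=
        ((hsum fun _ => a).hasSum.tendsto_sum_nat).comp (tendsto_add_atTop_nat 1)
      exact h1.rexp
    exact h2.log hQpos.ne'
  have hcC : Tendsto (fun n : ℕ =>
      (∑ m ∈ range n, Real.log (∑ a : A, Real.exp (∑ i ∈ range (m + 1), Real.log (g i a)))) / n)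
      atTop (𝓝 (Real.log (∑ a : A, Real.exp (∑' i, Real.log (g i a))))) := by
    simpa [div_eq_inv_mul] using hc.cesaro
  have hE : Tendsto (fun n : ℕ => (∑ d ∈ range n, ∑' i, v (i + d)) / n) atTop (𝓝 0) := by
    simpa [div_eq_inv_mul] using (tendsto_sum_nat_add v).cesaro
  have hlim : Real.log (g0 * ∑ a : A, ∏' k : ℕ, g k a)
      = Real.log g0 + Real.log (∑ a : A, Real.exp (∑' i, Real.log (g i a))) := by
    have h1 : (∑ a : A, ∏' k : ℕ, g k a) = ∑ a : A, Real.exp (∑' i, Real.log (g i a)) :=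
      Finset.sum_congr rfl fun a _ =>
        tprod_eq_exp_tsum_log (fun i => hg i a) (hsum fun _ => a)
    rw [h1, Real.log_mul hg0.ne' hQpos.ne']
  rw [hlim]
  have key := main_bound g0 hg0 g hg v hv hl1
  refine tendsto_of_tendsto_of_tendsto_of_le_of_le'
    (g := fun n : ℕ => Real.log g0 +
      ((∑ m ∈ range n, Real.log (∑ a : A, Real.exp (∑ i ∈ range (m + 1), Real.log (g i a)))) / n
        - (∑ d ∈ range n, ∑' i, v (i + d)) / n))
    (h := fun n : ℕ => Real.log g0 +
      ((∑ m ∈ range n, Real.log (∑ a : A, Real.exp (∑ i ∈ range (m + 1), Real.log (g i a)))) / n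
        + (∑ d ∈ range n, ∑' i, v (i + d)) / n))
    ?_ ?_ ?_ ?_
  · simpa using tendsto_const_nhds.add (hcC.sub hE)
  · simpa using tendsto_const_nhds.add (hcC.add hE)
  · filter_upwards [eventually_gt_atTop 0] with n hn
    have hn' : (0:ℝ) < (n:ℝ) := by exact_mod_cast hn
    have h1 := (abs_le.mp (key n)).1
    have h3 : ((n:ℝ) * Real.log g0
          + ∑ m ∈ range n, Real.log (∑ a : A, Real.exp (∑ i ∈ range (m + 1), Real.log (g i a)))
          - ∑ d ∈ range n, ∑' i, v (i + d)) / n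
        ≤ Real.log (∑ w : Fin n → A,
            ⨆ x : {x : ℕ → A // ∀ i : Fin n, x i = w i},
              ∏ j ∈ Finset.range n, (g0 * ∏' i : ℕ, g i (x.1 (i + j)))) / n := by
      gcongr
      linarith
    refine le_trans (le_of_eq ?_) h3
    field_simp
    ring
  · filter_upwards [eventually_gt_atTop 0] with n hn
    have hn' : (0:ℝ) < (n:ℝ) := by exact_mod_cast hn
    have h1 := (abs_le.mp (key n)).2
    have h3 : Real.log (∑ w : Fin n → A,
            ⨆ x : {x : ℕ → A // ∀ i : Fin n, x i = w i},
              ∏ j ∈ Finset.range n, (g0 * ∏' i : ℕ, g i (x.1 (i + j)))) / n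
        ≤ ((n:ℝ) * Real.log g0
          + ∑ m ∈ range n, Real.log (∑ a : A, Real.exp (∑ i ∈ range (m + 1), Real.log (g i a)))
          + ∑ d ∈ range n, ∑' i, v (i + d)) / n := by
      gcongr
      linarith
    refine le_trans h3 (le_of_eq ?_)
    field_simp
    ring
end

section
/- Let A be finite, μ the conformal product measure for a summable, ℓ1-bounded potential g of product type, and λ the conformality parameter. Then there is at most one h ∈ L^1(X,μ) with L_{log g}(h) = λ h and ∫ h dμ = 1. (The proof uses that λ^{−1} L_{log g} is the transfer operator of T with respect to μ, that T is exact since μ is a product measure via Kolmogorov's 0-1 law, and Lin's criterion: ‖λ^{−n} L^n(φ)‖_1 → 0 whenever ∫ φ dμ = 0.) -/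
open MeasureTheory

/-- Prepend a symbol to a sequence: `cons a x = (a, x_0, x_1, …)`. -/
def consSeq {A : Type*} (a : A) (x : ℕ → A) : ℕ → A
  | 0 => a
  | n + 1 => x n

open Filter ProbabilityTheory Finset

lemma consSeq_shift {A : Type*} (y : ℕ → A) : consSeq (y 0) (fun n => y (n+1)) = y := by
  funext n; cases n <;> rfl

lemma shift_consSeq {A : Type*} (a : A) (x : ℕ → A) :
    (fun n => consSeq a x (n+1)) = x := rfl

lemma measurable_consSeq {A : Type*} [MeasurableSpace A] (a : A) :
    Measurable (consSeq a : (ℕ → A) → (ℕ → A)) := by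
  apply measurable_pi_lambda
  intro n; cases n with
  | zero => exact measurable_const
  | succ m => exact measurable_pi_apply m

lemma measurable_shift {A : Type*} [MeasurableSpace A] :
    Measurable (fun (y : ℕ → A) (n : ℕ) => y (n+1)) :=
  measurable_pi_lambda _ (fun n => measurable_pi_apply (n+1))

lemma shift_iterate {A : Type*} (k : ℕ) :
    (fun (y : ℕ → A) (n : ℕ) => y (n+1))^[k] = fun y i => y (i + k) := by
  induction k with
  | zero => rfl
  | succ k ih =>
    funext y i
    rw [Function.iterate_succ_apply', ih]
    simp only []
    congr 1
    omega

lemma abs_sum_dichotomy {ι : Type*} (s : Finset ι) (t : ι → ℝ)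
    (h : |∑ i ∈ s, t i| = ∑ i ∈ s, |t i|) :
    (∀ i ∈ s, 0 ≤ t i) ∨ (∀ i ∈ s, t i ≤ 0) := by
  rcases le_or_gt 0 (∑ i ∈ s, t i) with hs | hs
  · left
    have h0 : ∑ i ∈ s, (|t i| - t i) = 0 := by
      rw [Finset.sum_sub_distrib, ← h, abs_of_nonneg hs, sub_self]
    intro i hi
    have := (Finset.sum_eq_zero_iff_of_nonneg (fun i _ => sub_nonneg.2 (le_abs_self _))).1 h0 i hi
    have h2 : |t i| = t i := by linarith
    linarith [abs_nonneg (t i)]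
  · right
    have h0 : ∑ i ∈ s, (|t i| + t i) = 0 := by
      rw [Finset.sum_add_distrib, ← h, abs_of_neg hs, neg_add_cancel]
    intro i hi
    have := (Finset.sum_eq_zero_iff_of_nonneg (fun i _ => by linarith [neg_abs_le (t i)])).1 h0 i hi
    linarith [abs_nonneg (t i)]


theorem aux_cylS {A : Type*} [Fintype A] [Nonempty A] [MeasurableSpace A]
    [MeasurableSingletonClass A]
    (p : ℕ → A → ENNReal) (μ : Measure (ℕ → A))
    (hp1 : ∀ i, ∑ a : A, p i a = 1)
    (hcyl : ∀ (n : ℕ) (a : ℕ → A), μ {x : ℕ → A | ∀ i < n, x i = a i}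
      = ∏ i ∈ Finset.range n, p i (a i)) :
    ∀ (k n : ℕ) (S : Finset ℕ), S ⊆ Finset.range n → (Finset.range n \ S).card = k →
      ∀ a : ℕ → A, μ {x : ℕ → A | ∀ i ∈ S, x i = a i} = ∏ i ∈ S, p i (a i) := by
  intro k
  induction k with
  | zero =>
    intro n S hsub hcard a
    have hS : S = Finset.range n := by
      apply Finset.eq_of_subset_of_card_le hsub
      have := Finset.card_sdiff_of_subset hsub
      omega
    subst hS
    have hset : {x : ℕ → A | ∀ i ∈ Finset.range n, x i = a i}
        = {x : ℕ → A | ∀ i < n, x i = a i} := by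
      ext x; simp [Finset.mem_range]
    rw [hset, hcyl]
  | succ k ih =>
    intro n S hsub hcard a
    have hne : (Finset.range n \ S).Nonempty := by
      rw [← Finset.card_pos, hcard]; omega
    obtain ⟨j, hj⟩ := hne
    rw [Finset.mem_sdiff] at hj
    obtain ⟨hjn, hjS⟩ := hj
    have hdecomp : {x : ℕ → A | ∀ i ∈ S, x i = a i}
        = ⋃ b : A, {x : ℕ → A | ∀ i ∈ insert j S, x i = Function.update a j b i} := by
      ext x
      simp only [Set.mem_iUnion, Set.mem_setOf_eq]
      constructor
      · intro hx
        refine ⟨x j, fun i hi => ?_⟩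
        rcases Finset.mem_insert.1 hi with rfl | hi
        · rw [Function.update_self]
        · rw [Function.update_of_ne (ne_of_mem_of_not_mem hi hjS)]
          exact hx i hi
      · rintro ⟨b, hb⟩ i hi
        have := hb i (Finset.mem_insert_of_mem hi)
        rwa [Function.update_of_ne (ne_of_mem_of_not_mem hi hjS)] at this
    have hmeas : ∀ (T : Finset ℕ) (c : ℕ → A),
        MeasurableSet {x : ℕ → A | ∀ i ∈ T, x i = c i} := by
      intro T c
      have : {x : ℕ → A | ∀ i ∈ T, x i = c i} = ⋂ i ∈ T, (fun x : ℕ → A => x i) ⁻¹' {c i} := by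
        ext x; simp
      rw [this]
      exact MeasurableSet.biInter T.countable_toSet
        (fun i _ => measurable_pi_apply i (measurableSet_singleton _))
    have hdisj : Pairwise (Function.onFun Disjoint
        (fun b : A => {x : ℕ → A | ∀ i ∈ insert j S, x i = Function.update a j b i})) := by
      intro b b' hbb'
      refine Set.disjoint_left.2 fun x hx hx' => hbb' ?_
      have h1 := hx j (Finset.mem_insert_self j S)
      have h2 := hx' j (Finset.mem_insert_self j S)
      rw [Function.update_self] at h1 h2
      rw [← h1, ← h2]
    rw [hdecomp, measure_iUnion hdisj (fun b => hmeas _ _), tsum_fintype]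
    have hih : ∀ b : A, μ {x : ℕ → A | ∀ i ∈ insert j S, x i = Function.update a j b i}
        = p j b * ∏ i ∈ S, p i (a i) := by
      intro b
      have hsub' : insert j S ⊆ Finset.range n := Finset.insert_subset hjn hsub
      have hcard' : (Finset.range n \ insert j S).card = k := by
        rw [Finset.sdiff_insert]
        rw [Finset.card_erase_of_mem (Finset.mem_sdiff.2 ⟨hjn, hjS⟩), hcard]; omega
      rw [ih n (insert j S) hsub' hcard', Finset.prod_insert hjS, Function.update_self]
      congr 1
      exact Finset.prod_congr rfl fun i hi => by
        rw [Function.update_of_ne (ne_of_mem_of_not_mem hi hjS)]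
    simp only [hih]
    rw [← Finset.sum_mul, hp1, one_mul]


theorem aux_indep {A : Type*} [Fintype A] [Nonempty A] [MeasurableSpace A]
    [MeasurableSingletonClass A]
    (p : ℕ → A → ENNReal) (μ : Measure (ℕ → A)) [IsProbabilityMeasure μ]
    (hp1 : ∀ i, ∑ a : A, p i a = 1)
    (hcyl : ∀ (n : ℕ) (a : ℕ → A), μ {x : ℕ → A | ∀ i < n, x i = a i}
      = ∏ i ∈ Finset.range n, p i (a i)) :
    iIndep (fun n => MeasurableSpace.comap (fun y : ℕ → A => y n) inferInstance) μ := by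
  classical
  have hcylS : ∀ (S : Finset ℕ) (a : ℕ → A),
      μ {x : ℕ → A | ∀ i ∈ S, x i = a i} = ∏ i ∈ S, p i (a i) := by
    intro S a
    have hsub : S ⊆ Finset.range (S.sup id + 1) := by
      intro i hi
      simp only [Finset.mem_range]
      exact Nat.lt_succ_of_le (Finset.le_sup (f := id) hi)
    exact aux_cylS p μ hp1 hcyl _ _ S hsub rfl a
  set π : ℕ → Set (Set (ℕ → A)) := fun n => {s | ∃ a : A, s = {x : ℕ → A | x n = a}} with hπ
  apply ProbabilityTheory.iIndepSets.iIndep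
    (m := fun n => MeasurableSpace.comap (fun y : ℕ → A => y n) inferInstance)
    (fun n => (measurable_pi_apply n).comap_le) π
  · intro n s hs t ht hst
    obtain ⟨a, rfl⟩ := hs
    obtain ⟨b, rfl⟩ := ht
    obtain ⟨x, hx1, hx2⟩ := hst
    have : a = b := by rw [← hx1, ← hx2]
    subst this
    simp only [Set.inter_self]; exact ⟨a, rfl⟩
  · intro n
    apply le_antisymm
    · rintro s ⟨s', hs', rfl⟩
      have : (fun y : ℕ → A => y n) ⁻¹' s' = ⋃ a ∈ s', {x : ℕ → A | x n = a} := by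
        ext x; simp [Set.mem_preimage]
      rw [this]
      exact MeasurableSet.biUnion s'.to_countable
        (fun a _ => MeasurableSpace.measurableSet_generateFrom ⟨a, rfl⟩)
    · apply MeasurableSpace.generateFrom_le
      rintro s ⟨a, rfl⟩
      exact ⟨{a}, measurableSet_singleton a, by ext x; simp⟩
  · rw [ProbabilityTheory.iIndepSets_iff]
    intro S f hf
    choose b hb using fun (i : ℕ) (hi : i ∈ S) => hf i hi
    set a : ℕ → A := fun i => if h : i ∈ S then b i h else Classical.arbitrary A with ha
    have hfa : ∀ i ∈ S, f i = {x : ℕ → A | x i = a i} := by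
      intro i hi
      rw [hb i hi, ha]
      simp [hi]
    have h1 : (⋂ i ∈ S, f i) = {x : ℕ → A | ∀ i ∈ S, x i = a i} := by
      ext x
      simp only [Set.mem_iInter, Set.mem_setOf_eq]
      constructor
      · intro hx i hi
        have := hx i hi
        rwa [hfa i hi] at this
      · intro hx i hi
        rw [hfa i hi]
        exact hx i hi
    rw [h1, hcylS S a]
    apply Finset.prod_congr rfl
    intro i hi
    rw [hfa i hi]
    have : {x : ℕ → A | x i = a i} = {x : ℕ → A | ∀ j ∈ ({i} : Finset ℕ), x j = a j} := by
      ext x; simp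
    rw [this, hcylS {i} a, Finset.prod_singleton]


theorem aux_zero_one {A : Type*} [MeasurableSpace A]
    (μ : Measure (ℕ → A))
    (hind : iIndep (fun n => MeasurableSpace.comap (fun y : ℕ → A => y n) inferInstance) μ)
    (P : Set (ℕ → A)) (hP : MeasurableSet P) :
    μ (⋂ n, ⋃ k, ⋃ _ : n ≤ k, (fun (y : ℕ → A) (i : ℕ) => y (i + k)) ⁻¹' P) = 0 ∨
    μ (⋂ n, ⋃ k, ⋃ _ : n ≤ k, (fun (y : ℕ → A) (i : ℕ) => y (i + k)) ⁻¹' P) = 1 := by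
  set s : ℕ → MeasurableSpace (ℕ → A) :=
    fun n => MeasurableSpace.comap (fun y : ℕ → A => y n) inferInstance with hs
  set Sk : ℕ → Set (ℕ → A) := fun k => (fun (y : ℕ → A) (i : ℕ) => y (i + k)) ⁻¹' P with hSk
  set t : Set (ℕ → A) := ⋂ n, ⋃ k, ⋃ _ : n ≤ k, Sk k with ht
  have hmeasMn : ∀ n k : ℕ, n ≤ k → MeasurableSet[⨆ i, ⨆ (_ : n ≤ i), s i] (Sk k) := by
    intro n k hnk
    have hmeas : @Measurable _ _ (⨆ i, ⨆ (_ : n ≤ i), s i) _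
        (fun (y : ℕ → A) (i : ℕ) => y (i + k)) := by
      rw [@measurable_pi_iff]
      intro i
      rw [measurable_iff_comap_le]
      exact le_trans (le_of_eq rfl) (le_iSup₂ (f := fun j (_ : n ≤ j) => s j) (i + k)
        (le_trans hnk (Nat.le_add_left k i)))
    exact hmeas hP
  have ht_tail : MeasurableSet[Filter.limsup s Filter.atTop] t := by
    rw [Filter.limsup_eq_iInf_iSup_of_nat, MeasurableSpace.measurableSet_iInf]
    intro n
    have htt : t = ⋂ m, ⋃ k, ⋃ _ : m + n ≤ k, Sk k := by
      apply Set.Subset.antisymm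
      · intro x hx
        apply Set.mem_iInter.2
        intro m
        exact Set.mem_iInter.1 hx (m + n)
      · intro x hx
        apply Set.mem_iInter.2
        intro m
        have := Set.mem_iInter.1 hx m
        obtain ⟨k, hk, hxk⟩ := by
          simpa only [Set.mem_iUnion] using this
        exact Set.mem_iUnion.2 ⟨k, Set.mem_iUnion.2 ⟨le_trans (by omega : m ≤ m + n) hk, hxk⟩⟩
    rw [htt]
    apply MeasurableSet.iInter
    intro m
    apply MeasurableSet.iUnion
    intro k
    apply MeasurableSet.iUnion
    intro hk
    exact hmeasMn n k (by omega)
  exact ProbabilityTheory.measure_zero_or_one_of_measurableSet_limsup_atTop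
    (fun n => (measurable_pi_apply n).comap_le) hind ht_tail


/-- Let `A` be finite, `μ` the conformal product measure for a summable,
ℓ1-bounded potential `g = g0 ∏ g_k` of product type (cylinder weights
`w_n(a) = ∏_{i≤n} g_i(a) / ∑_b ∏_{i≤n} g_i(b)`), `λ` the conformality parameter, with the
duality `∫ L_{log g}(φ) dμ = λ ∫ φ dμ`. Then there is at most one `h ∈ L¹(X,μ)` with
`L_{log g}(h) = λ h` and `∫ h dμ = 1`. -/
theorem stmt_16 {A : Type*} [Fintype A] [Nonempty A] [MeasurableSpace A]
    [MeasurableSingletonClass A]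
    (g0 : ℝ) (hg0 : 0 < g0) (g : ℕ → A → ℝ) (hg : ∀ (k : ℕ) (a : A), 0 < g k a)
    (v : ℕ → ℝ) (hv : ∀ (k : ℕ) (a : A), |Real.log (g (k + 1) a)| ≤ v k)
    (hl1 : Summable v)
    (μ : Measure (ℕ → A)) (hμ : IsProbabilityMeasure μ)
    (hcyl : ∀ (n : ℕ) (a : ℕ → A),
      μ {x : ℕ → A | ∀ i < n, x i = a i} =
        ∏ i ∈ Finset.range n, ENNReal.ofReal
          ((∏ l ∈ Finset.range (i + 1), g l (a i)) /
            ∑ b : A, ∏ l ∈ Finset.range (i + 1), g l b))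
    (lam : ℝ) (hlam : lam = g0 * ∑ a : A, ∏' k : ℕ, g k a)
    (hdual : ∀ φ : (ℕ → A) → ℝ, Integrable φ μ →
      ∫ x, (∑ a : A, φ (consSeq a x) * (g0 * ∏' k : ℕ, g k (consSeq a x k))) ∂μ =
        lam * ∫ x, φ x ∂μ)
    (h₁ h₂ : (ℕ → A) → ℝ)
    (hi₁ : Integrable h₁ μ) (hi₂ : Integrable h₂ μ)
    (he₁ : ∀ᵐ x ∂μ,
      ∑ a : A, h₁ (consSeq a x) * (g0 * ∏' k : ℕ, g k (consSeq a x k)) = lam * h₁ x)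
    (he₂ : ∀ᵐ x ∂μ,
      ∑ a : A, h₂ (consSeq a x) * (g0 * ∏' k : ℕ, g k (consSeq a x k)) = lam * h₂ x)
    (hn₁ : ∫ x, h₁ x ∂μ = 1) (hn₂ : ∫ x, h₂ x ∂μ = 1) :
    h₁ =ᵐ[μ] h₂ := by
  classical
  have hA : (Finset.univ : Finset A).Nonempty := Finset.univ_nonempty
  -- summability facts
  have hv0 : ∀ k, 0 ≤ v k := fun k => le_trans (abs_nonneg _) (hv k (Classical.arbitrary A))
  have hsum1 : ∀ x : ℕ → A, Summable (fun k => Real.log (g (k+1) (x k))) := fun x =>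
    Summable.of_abs (Summable.of_nonneg_of_le (fun k => abs_nonneg _) (fun k => hv k (x k)) hl1)
  have hsum0 : ∀ x : ℕ → A, Summable (fun k => Real.log (g k (x k))) := by
    intro x
    exact (summable_nat_add_iff 1).1 (hsum1 (fun n => x (n+1)))
  set V : ℝ := ∑' k, v k with hV
  set W : (ℕ → A) → ℝ := fun x => ∏' k, g (k+1) (x k) with hWdef
  have hexp2 : ∀ x, W x = Real.exp (∑' k, Real.log (g (k+1) (x k))) := by
    intro x
    exact (Real.rexp_tsum_eq_tprod (f := fun k => g (k+1) (x k))
      (fun k => hg _ _) (hsum1 x)).symm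
  have hexp0 : ∀ x : ℕ → A, (∏' k, g k (x k)) = Real.exp (∑' k, Real.log (g k (x k))) := by
    intro x
    exact (Real.rexp_tsum_eq_tprod (f := fun k => g k (x k))
      (fun k => hg _ _) (hsum0 x)).symm
  have hWpos : ∀ x, 0 < W x := fun x => (hexp2 x).symm ▸ Real.exp_pos _
  have htsum_le : ∀ x : ℕ → A, |∑' k, Real.log (g (k+1) (x k))| ≤ V := by
    intro x
    have h1 : |∑' k, Real.log (g (k+1) (x k))| ≤ ∑' k, |Real.log (g (k+1) (x k))| := by
      simpa [Real.norm_eq_abs] using norm_tsum_le_tsum_norm (f := fun k => Real.log (g (k+1) (x k)))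
        (by simpa [Real.norm_eq_abs] using (hsum1 x).abs)
    exact h1.trans (Summable.tsum_le_tsum (fun k => hv k (x k)) (hsum1 x).abs hl1)
  have hWle : ∀ x, W x ≤ Real.exp V := by
    intro x
    rw [hexp2 x]
    exact Real.exp_le_exp.2 (le_of_abs_le (htsum_le x))
  -- splitting the weight
  have hsplit : ∀ (a : A) (x : ℕ → A), (∏' k, g k (consSeq a x k)) = g 0 a * W x := by
    intro a x
    rw [hexp0 (consSeq a x), Summable.tsum_eq_zero_add (hsum0 (consSeq a x)), Real.exp_add]
    show Real.exp (Real.log (g 0 a)) * Real.exp (∑' k, Real.log (g (k+1) (x k))) = g 0 a * W x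
    rw [Real.exp_log (hg 0 a), hexp2 x]
  set CW : ℝ := g0 * ((∑ a : A, g 0 a) * Real.exp V) with hCW
  have hwpos : ∀ (a : A) (x : ℕ → A), 0 < g0 * ∏' k, g k (consSeq a x k) := by
    intro a x
    rw [hsplit]
    exact mul_pos hg0 (mul_pos (hg 0 a) (hWpos x))
  have hwle : ∀ (a : A) (x : ℕ → A), g0 * ∏' k, g k (consSeq a x k) ≤ CW := by
    intro a x
    rw [hsplit, hCW]
    apply mul_le_mul_of_nonneg_left _ hg0.le
    apply mul_le_mul (Finset.single_le_sum (fun b _ => (hg 0 b).le) (Finset.mem_univ a))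
      (hWle x) (hWpos x).le
    exact Finset.sum_nonneg (fun b _ => (hg 0 b).le)
  have hCWpos : 0 < CW := lt_of_lt_of_le (hwpos (Classical.arbitrary A) (Classical.arbitrary _)) (hwle _ _)
  have hlampos : 0 < lam := by
    rw [hlam]
    apply mul_pos hg0
    apply Finset.sum_pos _ hA
    intro a _
    have h : (∏' k, g k a) = ∏' k, g k ((fun _ : ℕ => a) k) := rfl
    rw [h, hexp0]
    exact Real.exp_pos _
  -- measurability
  have hWmeas : Measurable W := by
    have hts : Measurable (fun x : ℕ → A => ∑' k, Real.log (g (k+1) (x k))) := by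
      apply measurable_of_tendsto_metrizable
        (f := fun n (x : ℕ → A) => ∑ k ∈ Finset.range n, Real.log (g (k+1) (x k)))
      · intro n
        apply Finset.measurable_sum
        intro k _
        exact (measurable_of_finite (fun c : A => Real.log (g (k+1) c))).comp (measurable_pi_apply k)
      · rw [tendsto_pi_nhds]
        intro x
        exact (hsum1 x).hasSum.tendsto_sum_nat
    have : W = fun x => Real.exp (∑' k, Real.log (g (k+1) (x k))) := funext hexp2
    rw [this]
    exact Real.measurable_exp.comp hts
  have hwmeas : ∀ a : A, Measurable (fun x : ℕ → A => g0 * ∏' k, g k (consSeq a x k)) := by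
    intro a
    have : (fun x : ℕ → A => g0 * ∏' k, g k (consSeq a x k))
        = fun x => g0 * (g 0 a * W x) := funext fun x => by rw [hsplit]
    rw [this]
    exact measurable_const.mul (measurable_const.mul hWmeas)
  -- shift
  set T : (ℕ → A) → ℕ → A := fun y n => y (n+1) with hTdef
  have hTmeas : Measurable T := measurable_shift
  have hTcons : ∀ (a : A) (x : ℕ → A), T (consSeq a x) = x := fun a x => rfl
  have hconsT : ∀ y : ℕ → A, consSeq (y 0) (T y) = y := fun y => consSeq_shift y
  -- quasi-invariance
  have quasi : ∀ S : Set (ℕ → A), MeasurableSet S → μ S = 0 → μ (T ⁻¹' S) = 0 := by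
    intro S hS hS0
    have hint : Integrable ((T ⁻¹' S).indicator (1 : (ℕ → A) → ℝ)) μ :=
      (integrable_const (1:ℝ)).indicator (hTmeas hS)
    have hd := hdual _ hint
    have hLHS : ∫ x, (∑ a : A, ((T ⁻¹' S).indicator (1 : (ℕ → A) → ℝ) (consSeq a x))
        * (g0 * ∏' k, g k (consSeq a x k))) ∂μ = 0 := by
      apply integral_eq_zero_of_ae
      filter_upwards [measure_eq_zero_iff_ae_notMem.1 hS0] with x hx
      simp only [Pi.zero_apply]
      apply Finset.sum_eq_zero
      intro a _
      have hnm : consSeq a x ∉ T ⁻¹' S := by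
        rw [Set.mem_preimage, hTcons]; exact hx
      rw [Set.indicator_of_notMem hnm, zero_mul]
    rw [hLHS] at hd
    rw [integral_indicator_one (hTmeas hS)] at hd
    have := (mul_eq_zero.1 hd.symm).resolve_left (ne_of_gt hlampos)
    rwa [measureReal_def, ENNReal.toReal_eq_zero_iff, or_iff_left (measure_ne_top μ _)] at this
  -- pullback along consSeq
  have pull : ∀ S : Set (ℕ → A), MeasurableSet S → μ S = 0 →
      ∀ᵐ x ∂μ, ∀ a : A, consSeq a x ∉ S := by
    intro S hS hS0
    have hint : Integrable (S.indicator (1 : (ℕ → A) → ℝ)) μ := (integrable_const (1:ℝ)).indicator hS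
    have hd := hdual _ hint
    rw [integral_indicator_one hS, measureReal_def, hS0, ENNReal.toReal_zero, mul_zero] at hd
    set F := fun x => ∑ a : A, S.indicator (1 : (ℕ → A) → ℝ) (consSeq a x)
      * (g0 * ∏' k, g k (consSeq a x k)) with hFdef
    have hFnn : ∀ x, 0 ≤ F x := by
      intro x
      apply Finset.sum_nonneg
      intro a _
      exact mul_nonneg (Set.indicator_nonneg (fun _ _ => zero_le_one) _) (hwpos a x).le
    have hFmeas : Measurable F := by
      apply Finset.measurable_sum
      intro a _
      exact ((measurable_const.indicator hS).comp (measurable_consSeq a)).mul (hwmeas a)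
    have hFint : Integrable F μ := by
      apply Integrable.mono' (integrable_const ((Fintype.card A : ℝ) * CW))
        hFmeas.aestronglyMeasurable
      filter_upwards with x
      rw [Real.norm_eq_abs, abs_of_nonneg (hFnn x)]
      calc F x ≤ ∑ _a : A, CW := by
            apply Finset.sum_le_sum
            intro a _
            calc S.indicator (1 : (ℕ → A) → ℝ) (consSeq a x) * (g0 * ∏' k, g k (consSeq a x k))
                ≤ 1 * (g0 * ∏' k, g k (consSeq a x k)) := by
                  apply mul_le_mul_of_nonneg_right _ (hwpos a x).le
                  exact Set.indicator_le_self' (fun _ _ => zero_le_one) _ |>.trans le_rfl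
              _ ≤ 1 * CW := by rw [one_mul, one_mul]; exact hwle a x
              _ = CW := one_mul _
        _ = (Fintype.card A : ℝ) * CW := by rw [Finset.sum_const, Finset.card_univ, nsmul_eq_mul]
    have hF0 : F =ᵐ[μ] 0 := (integral_eq_zero_iff_of_nonneg_ae
      (Eventually.of_forall hFnn) hFint).1 hd
    filter_upwards [hF0] with x hx a
    intro hmem
    have h1 : S.indicator (1 : (ℕ → A) → ℝ) (consSeq a x) = 1 := Set.indicator_of_mem hmem _
    have hlt : (0:ℝ) < F x := by
      have hterm : (0:ℝ) < S.indicator (1 : (ℕ → A) → ℝ) (consSeq a x)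
          * (g0 * ∏' k, g k (consSeq a x k)) := by
        rw [h1, one_mul]; exact hwpos a x
      apply lt_of_lt_of_le hterm
      apply Finset.single_le_sum (f := fun a : A => S.indicator (1 : (ℕ → A) → ℝ) (consSeq a x)
        * (g0 * ∏' k, g k (consSeq a x k))) _ (Finset.mem_univ a)
      intro b _
      exact mul_nonneg (Set.indicator_nonneg (fun _ _ => zero_le_one) _) (hwpos b x).le
    rw [hx] at hlt
    exact lt_irrefl _ hlt
  have pull' : ∀ S : Set (ℕ → A), μ S = 0 → ∀ᵐ x ∂μ, ∀ a : A, consSeq a x ∉ S := by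
    intro S hS0
    obtain ⟨N, hSN, hNmeas, hN0⟩ := exists_measurable_superset_of_null hS0
    filter_upwards [pull N hNmeas hN0] with x hx a
    exact fun h => hx a (hSN h)
  -- measurable representatives
  obtain ⟨f₁, hf₁meas, hf₁⟩ : ∃ f : (ℕ → A) → ℝ, Measurable f ∧ h₁ =ᵐ[μ] f :=
    ⟨hi₁.1.mk h₁, hi₁.1.stronglyMeasurable_mk.measurable, hi₁.1.ae_eq_mk⟩
  obtain ⟨f₂, hf₂meas, hf₂⟩ : ∃ f : (ℕ → A) → ℝ, Measurable f ∧ h₂ =ᵐ[μ] f :=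
    ⟨hi₂.1.mk h₂, hi₂.1.stronglyMeasurable_mk.measurable, hi₂.1.ae_eq_mk⟩
  set φ : (ℕ → A) → ℝ := fun x => f₁ x - f₂ x with hφdef
  have hφmeas : Measurable φ := hf₁meas.sub hf₂meas
  have hif₁ : Integrable f₁ μ := hi₁.congr hf₁
  have hif₂ : Integrable f₂ μ := hi₂.congr hf₂
  have hφint : Integrable φ μ := hif₁.sub hif₂
  have hφ0 : ∫ x, φ x ∂μ = 0 := by
    rw [hφdef, integral_sub hif₁ hif₂, ← integral_congr_ae hf₁, ← integral_congr_ae hf₂,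
      hn₁, hn₂, sub_self]
  have hpull₁ : ∀ᵐ x ∂μ, ∀ a : A, h₁ (consSeq a x) = f₁ (consSeq a x) := by
    filter_upwards [pull' _ (ae_iff.1 hf₁)] with x hx a
    by_contra hne
    exact hx a hne
  have hpull₂ : ∀ᵐ x ∂μ, ∀ a : A, h₂ (consSeq a x) = f₂ (consSeq a x) := by
    filter_upwards [pull' _ (ae_iff.1 hf₂)] with x hx a
    by_contra hne
    exact hx a hne
  have heφ : ∀ᵐ x ∂μ, ∑ a : A, φ (consSeq a x) * (g0 * ∏' k, g k (consSeq a x k))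
      = lam * φ x := by
    filter_upwards [he₁, he₂, hpull₁, hpull₂, hf₁, hf₂] with x h1x h2x hp1 hp2 hfx1 hfx2
    have hsum : ∑ a : A, φ (consSeq a x) * (g0 * ∏' k, g k (consSeq a x k))
        = (∑ a : A, h₁ (consSeq a x) * (g0 * ∏' k, g k (consSeq a x k)))
          - ∑ a : A, h₂ (consSeq a x) * (g0 * ∏' k, g k (consSeq a x k)) := by
      rw [← Finset.sum_sub_distrib]
      apply Finset.sum_congr rfl
      intro a _
      rw [hφdef]
      simp only
      rw [hp1 a, hp2 a, sub_mul]
    rw [hsum, h1x, h2x, hφdef]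
    simp only
    rw [hfx1, hfx2]
    ring
  -- independence of coordinates
  have hp1sum : ∀ i : ℕ, ∑ a : A, ENNReal.ofReal ((∏ l ∈ Finset.range (i+1), g l a) /
      ∑ b : A, ∏ l ∈ Finset.range (i+1), g l b) = 1 := by
    intro i
    have hQ : 0 < ∑ b : A, ∏ l ∈ Finset.range (i+1), g l b :=
      Finset.sum_pos (fun b _ => Finset.prod_pos (fun l _ => hg l b)) hA
    rw [← ENNReal.ofReal_sum_of_nonneg]
    · rw [← Finset.sum_div, div_self (ne_of_gt hQ), ENNReal.ofReal_one]
    · intro a _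
      exact div_nonneg (Finset.prod_nonneg (fun l _ => (hg l a).le)) hQ.le
  have hindep := aux_indep (fun i c => ENNReal.ofReal ((∏ l ∈ Finset.range (i+1), g l c) /
      ∑ b : A, ∏ l ∈ Finset.range (i+1), g l b)) μ hp1sum hcyl
  -- triangle equality for the transfer operator
  set B : (ℕ → A) → ℝ := fun x => ∑ a : A, |φ (consSeq a x)|
      * (g0 * ∏' k, g k (consSeq a x k)) with hBdef
  have hBmeas : Measurable B := Finset.measurable_sum _ (fun a _ =>
    ((hφmeas.comp (measurable_consSeq a)).abs).mul (hwmeas a))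
  have hBnn : ∀ x, 0 ≤ B x := fun x => Finset.sum_nonneg (fun a _ =>
    mul_nonneg (abs_nonneg _) (hwpos a x).le)
  have hmin_int : ∀ n : ℕ, Integrable (fun x => min (|φ x|) (n : ℝ)) μ := by
    intro n
    apply Integrable.mono' hφint.abs ((hφmeas.abs.min measurable_const).aestronglyMeasurable)
    filter_upwards with x
    rw [Real.norm_eq_abs, abs_of_nonneg (le_min (abs_nonneg _) (Nat.cast_nonneg n))]
    exact min_le_left _ _
  set Bn : ℕ → (ℕ → A) → ℝ := fun n x => ∑ a : A, min (|φ (consSeq a x)|) (n:ℝ)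
      * (g0 * ∏' k, g k (consSeq a x k)) with hBndef
  have hBn_meas : ∀ n, Measurable (Bn n) := fun n => Finset.measurable_sum _ (fun a _ =>
    (((hφmeas.comp (measurable_consSeq a)).abs.min measurable_const)).mul (hwmeas a))
  have hBn_nn : ∀ n x, 0 ≤ Bn n x := fun n x => Finset.sum_nonneg (fun a _ =>
    mul_nonneg (le_min (abs_nonneg _) (Nat.cast_nonneg n)) (hwpos a x).le)
  have hBn_int : ∀ n, Integrable (Bn n) μ := by
    intro n
    apply Integrable.mono' (integrable_const ((Fintype.card A : ℝ) * ((n:ℝ) * CW)))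
      (hBn_meas n).aestronglyMeasurable
    filter_upwards with x
    rw [Real.norm_eq_abs, abs_of_nonneg (hBn_nn n x)]
    calc Bn n x ≤ ∑ _a : A, (n:ℝ) * CW := Finset.sum_le_sum (fun a _ => by
          apply mul_le_mul (min_le_right _ _) (hwle a x) (hwpos a x).le (Nat.cast_nonneg n))
      _ = (Fintype.card A : ℝ) * ((n:ℝ) * CW) := by
          rw [Finset.sum_const, Finset.card_univ, nsmul_eq_mul]
  have hBn_eq : ∀ n : ℕ, ∫ x, Bn n x ∂μ = lam * ∫ x, min (|φ x|) (n:ℝ) ∂μ := fun n =>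
    hdual _ (hmin_int n)
  have hsupBn : ∀ x, ENNReal.ofReal (B x) = ⨆ n : ℕ, ENNReal.ofReal (Bn n x) := by
    intro x
    apply le_antisymm
    · obtain ⟨m, hm⟩ := exists_nat_ge (∑ a : A, |φ (consSeq a x)|)
      have hBm : B x = Bn m x := by
        apply Finset.sum_congr rfl
        intro a _
        congr 1
        rw [min_eq_left]
        exact le_trans (Finset.single_le_sum (fun b _ => abs_nonneg (φ (consSeq b x)))
          (Finset.mem_univ a)) hm
      rw [hBm]
      exact le_iSup (fun n => ENNReal.ofReal (Bn n x)) m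
    · apply iSup_le
      intro n
      apply ENNReal.ofReal_le_ofReal
      apply Finset.sum_le_sum
      intro a _
      exact mul_le_mul_of_nonneg_right (min_le_left _ _) (hwpos a x).le
  have hmono : Monotone (fun n (x : ℕ → A) => ENNReal.ofReal (Bn n x)) := by
    intro n m hnm
    intro x
    apply ENNReal.ofReal_le_ofReal
    apply Finset.sum_le_sum
    intro a _
    exact mul_le_mul_of_nonneg_right (min_le_min le_rfl (Nat.cast_le.2 hnm)) (hwpos a x).le
  have hlin : ∫⁻ x, ENNReal.ofReal (B x) ∂μ ≤ ENNReal.ofReal (lam * ∫ x, |φ x| ∂μ) := by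
    have h1 : ∫⁻ x, ENNReal.ofReal (B x) ∂μ = ⨆ n, ∫⁻ x, ENNReal.ofReal (Bn n x) ∂μ := by
      calc ∫⁻ x, ENNReal.ofReal (B x) ∂μ = ∫⁻ x, ⨆ n, ENNReal.ofReal (Bn n x) ∂μ :=
            lintegral_congr (fun x => hsupBn x)
        _ = ⨆ n, ∫⁻ x, ENNReal.ofReal (Bn n x) ∂μ :=
            lintegral_iSup (fun n => (hBn_meas n).ennreal_ofReal) hmono
    rw [h1]
    apply iSup_le
    intro n
    rw [← ofReal_integral_eq_lintegral_ofReal (hBn_int n) (Eventually.of_forall (hBn_nn n))]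
    apply ENNReal.ofReal_le_ofReal
    rw [hBn_eq n]
    apply mul_le_mul_of_nonneg_left _ hlampos.le
    exact integral_mono (hmin_int n) hφint.abs (fun x => min_le_left _ _)
  have haeB : ∀ᵐ x ∂μ, lam * |φ x| ≤ B x := by
    filter_upwards [heφ] with x hx
    calc lam * |φ x| = |lam * φ x| := by rw [abs_mul, abs_of_pos hlampos]
      _ = |∑ a : A, φ (consSeq a x) * (g0 * ∏' k, g k (consSeq a x k))| := by rw [hx]
      _ ≤ ∑ a : A, |φ (consSeq a x) * (g0 * ∏' k, g k (consSeq a x k))| :=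
          Finset.abs_sum_le_sum_abs _ _
      _ = B x := Finset.sum_congr rfl (fun a _ => by rw [abs_mul, abs_of_pos (hwpos a x)])
  have hlam_abs_int : Integrable (fun x => lam * |φ x|) μ := hφint.abs.const_mul lam
  have heqlin : ∫⁻ x, ENNReal.ofReal (lam * |φ x|) ∂μ
      = ENNReal.ofReal (lam * ∫ x, |φ x| ∂μ) := by
    rw [← ofReal_integral_eq_lintegral_ofReal hlam_abs_int
      (Eventually.of_forall (fun x => mul_nonneg hlampos.le (abs_nonneg _)))]
    congr 1
    exact integral_const_mul lam _
  have hBae : (fun x => ENNReal.ofReal (lam * |φ x|)) =ᵐ[μ] (fun x => ENNReal.ofReal (B x)) := by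
    apply ae_eq_of_ae_le_of_lintegral_le
    · filter_upwards [haeB] with x hx
      exact ENNReal.ofReal_le_ofReal hx
    · rw [heqlin]; exact ENNReal.ofReal_ne_top
    · exact (hBmeas.ennreal_ofReal).aemeasurable
    · rw [heqlin]; exact hlin
  have hBeq : ∀ᵐ x ∂μ, B x = lam * |φ x| := by
    filter_upwards [hBae] with x hx
    exact ((ENNReal.ofReal_eq_ofReal_iff (mul_nonneg hlampos.le (abs_nonneg _)) (hBnn x)).1 hx).symm
  -- sign coherence
  have hK : ∀ᵐ x ∂μ, ∀ a : A, (0 < φ (consSeq a x) → 0 < φ x)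
      ∧ (φ (consSeq a x) < 0 → φ x < 0) := by
    filter_upwards [heφ, hBeq] with x hx hbx
    have habs : |∑ a : A, φ (consSeq a x) * (g0 * ∏' k, g k (consSeq a x k))|
        = ∑ a : A, |φ (consSeq a x) * (g0 * ∏' k, g k (consSeq a x k))| := by
      rw [hx, abs_mul, abs_of_pos hlampos, ← hbx]
      apply Finset.sum_congr rfl
      intro a _
      rw [abs_mul, abs_of_pos (hwpos a x)]
    have hdich := abs_sum_dichotomy Finset.univ _ habs
    intro a
    constructor
    · intro hpos
      rcases hdich with hd | hd
      · have hterm : 0 < φ (consSeq a x) * (g0 * ∏' k, g k (consSeq a x k)) :=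
          mul_pos hpos (hwpos a x)
        have hlt : 0 < lam * φ x := by
          rw [← hx]
          exact lt_of_lt_of_le hterm (Finset.single_le_sum hd (Finset.mem_univ a))
        nlinarith
      · exfalso
        have := hd a (Finset.mem_univ a)
        nlinarith [mul_pos hpos (hwpos a x)]
    · intro hneg
      rcases hdich with hd | hd
      · exfalso
        have := hd a (Finset.mem_univ a)
        nlinarith [hwpos a x]
      · have hterm : φ (consSeq a x) * (g0 * ∏' k, g k (consSeq a x k)) < 0 :=
          mul_neg_of_neg_of_pos hneg (hwpos a x)
        have h2 : -(φ (consSeq a x) * (g0 * ∏' k, g k (consSeq a x k)))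
            ≤ ∑ b : A, -(φ (consSeq b x) * (g0 * ∏' k, g k (consSeq b x k))) :=
          Finset.single_le_sum (fun b _ => neg_nonneg.2 (hd b (Finset.mem_univ b)))
            (Finset.mem_univ a)
        rw [Finset.sum_neg_distrib] at h2
        have hlt : lam * φ x < 0 := by
          rw [← hx]
          have h2' : ∑ b : A, φ (consSeq b x) * (g0 * ∏' k, g k (consSeq b x k))
              ≤ φ (consSeq a x) * (g0 * ∏' k, g k (consSeq a x k)) := by linarith
          exact lt_of_le_of_lt h2' hterm
        nlinarith
  -- the set where sign coherence holds
  set K : Set (ℕ → A) := {x | ∀ a : A, (0 < φ (consSeq a x) → 0 < φ x)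
      ∧ (φ (consSeq a x) < 0 → φ x < 0)} with hKsetdef
  have hKmeas : MeasurableSet K := by
    have hKeq : K = ⋂ a : A,
        (({x : ℕ → A | 0 < φ (consSeq a x)}ᶜ ∪ {x : ℕ → A | 0 < φ x})
          ∩ ({x : ℕ → A | φ (consSeq a x) < 0}ᶜ ∪ {x : ℕ → A | φ x < 0})) := by
      ext x
      simp only [hKsetdef, Set.mem_iInter, Set.mem_setOf_eq, Set.mem_inter_iff, Set.mem_union,
        Set.mem_compl_iff]
      constructor
      · intro hx a
        exact ⟨(imp_iff_not_or.1 (hx a).1), (imp_iff_not_or.1 (hx a).2)⟩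
      · intro hx a
        exact ⟨imp_iff_not_or.2 (hx a).1, imp_iff_not_or.2 (hx a).2⟩
    rw [hKeq]
    apply MeasurableSet.iInter
    intro a
    have hm1 : MeasurableSet {x : ℕ → A | 0 < φ (consSeq a x)} :=
      measurableSet_lt measurable_const (hφmeas.comp (measurable_consSeq a))
    have hm2 : MeasurableSet {x : ℕ → A | 0 < φ x} := measurableSet_lt measurable_const hφmeas
    have hm3 : MeasurableSet {x : ℕ → A | φ (consSeq a x) < 0} :=
      measurableSet_lt (hφmeas.comp (measurable_consSeq a)) measurable_const
    have hm4 : MeasurableSet {x : ℕ → A | φ x < 0} := measurableSet_lt hφmeas measurable_const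
    exact (hm1.compl.union hm2).inter (hm3.compl.union hm4)
  have hKae : μ Kᶜ = 0 := by
    rw [measure_eq_zero_iff_ae_notMem]
    filter_upwards [hK] with x hx
    intro hc
    exact hc hx
  -- iterated quasi-invariance and propagation of signs
  have hquasiN : ∀ (n : ℕ) (S : Set (ℕ → A)), MeasurableSet S → μ S = 0 →
      μ (T^[n] ⁻¹' S) = 0 := by
    intro n
    induction n with
    | zero => intro S hS h0; simpa using h0
    | succ n ih =>
      intro S hS h0
      rw [Function.iterate_succ, Set.preimage_comp]
      exact quasi _ ((hTmeas.iterate n) hS) (ih S hS h0)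
  have hGood : μ (T ⁻¹' Kᶜ) = 0 := quasi _ hKmeas.compl hKae
  have hAll : ∀ᵐ y ∂μ, ∀ n : ℕ, T^[n] y ∈ T ⁻¹' K := by
    rw [ae_all_iff]
    intro n
    have h0 := hquasiN n _ (hTmeas hKmeas.compl) hGood
    rw [measure_eq_zero_iff_ae_notMem] at h0
    filter_upwards [h0] with y hy
    simp only [Set.mem_preimage, Set.mem_compl_iff] at hy ⊢
    by_contra hc
    exact hy hc
  have hstep : ∀ y : ℕ → A, T y ∈ K → ((0 < φ y → 0 < φ (T y)) ∧ (φ y < 0 → φ (T y) < 0)) := by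
    intro y hy
    have h := hy (y 0)
    rwa [hconsT y] at h
  have hprop2 : ∀ᵐ y ∂μ, ∀ k m : ℕ, k ≤ m →
      (0 < φ (T^[k] y) → 0 < φ (T^[m] y)) ∧ (φ (T^[k] y) < 0 → φ (T^[m] y) < 0) := by
    filter_upwards [hAll] with y hy
    intro k m hkm
    induction m, hkm using Nat.le_induction with
    | base => exact ⟨id, id⟩
    | succ m hkm ih =>
      have hs := hstep (T^[m] y) (hy m)
      constructor
      · intro h0
        rw [Function.iterate_succ_apply']
        exact hs.1 (ih.1 h0)
      · intro h0
        rw [Function.iterate_succ_apply']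
        exact hs.2 (ih.2 h0)
  -- the tail sets
  set tP : Set (ℕ → A) := ⋂ n, ⋃ k, ⋃ _ : n ≤ k, T^[k] ⁻¹' {x : ℕ → A | 0 < φ x} with htPdef
  set tN : Set (ℕ → A) := ⋂ n, ⋃ k, ⋃ _ : n ≤ k, T^[k] ⁻¹' {x : ℕ → A | φ x < 0} with htNdef
  have hPmeas : MeasurableSet {x : ℕ → A | 0 < φ x} := measurableSet_lt measurable_const hφmeas
  have hNmeas : MeasurableSet {x : ℕ → A | φ x < 0} := measurableSet_lt hφmeas measurable_const
  have hshiftk : ∀ (k : ℕ), (fun (y : ℕ → A) (i : ℕ) => y (i + k)) = T^[k] := by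
    intro k
    rw [hTdef, shift_iterate k]
  have htPmeasS : MeasurableSet tP := by
    rw [htPdef]
    exact MeasurableSet.iInter (fun n => MeasurableSet.iUnion (fun k =>
      MeasurableSet.iUnion (fun _ => (hTmeas.iterate k) hPmeas)))
  have htNmeasS : MeasurableSet tN := by
    rw [htNdef]
    exact MeasurableSet.iInter (fun n => MeasurableSet.iUnion (fun k =>
      MeasurableSet.iUnion (fun _ => (hTmeas.iterate k) hNmeas)))
  have h01P : μ tP = 0 ∨ μ tP = 1 := by
    have h := aux_zero_one μ hindep _ hPmeas
    have he : (⋂ n, ⋃ k, ⋃ _ : n ≤ k,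
        (fun (y : ℕ → A) (i : ℕ) => y (i + k)) ⁻¹' {x : ℕ → A | 0 < φ x}) = tP := by
      rw [htPdef]
      apply Set.iInter_congr
      intro n
      apply Set.iUnion_congr
      intro k
      apply Set.iUnion_congr
      intro hk
      rw [hshiftk k]
    rwa [he] at h
  have h01N : μ tN = 0 ∨ μ tN = 1 := by
    have h := aux_zero_one μ hindep _ hNmeas
    have he : (⋂ n, ⋃ k, ⋃ _ : n ≤ k,
        (fun (y : ℕ → A) (i : ℕ) => y (i + k)) ⁻¹' {x : ℕ → A | φ x < 0}) = tN := by
      rw [htNdef]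
      apply Set.iInter_congr
      intro n
      apply Set.iUnion_congr
      intro k
      apply Set.iUnion_congr
      intro hk
      rw [hshiftk k]
    rwa [he] at h
  have hPsubtP : ∀ᵐ y ∂μ, 0 < φ y → y ∈ tP := by
    filter_upwards [hprop2] with y hy h0
    simp only [htPdef, Set.mem_iInter, Set.mem_iUnion, Set.mem_preimage, Set.mem_setOf_eq]
    intro n
    refine ⟨n, le_rfl, ?_⟩
    exact (hy 0 n (Nat.zero_le n)).1 (by simpa using h0)
  have hNsubtN : ∀ᵐ y ∂μ, φ y < 0 → y ∈ tN := by
    filter_upwards [hprop2] with y hy h0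
    simp only [htNdef, Set.mem_iInter, Set.mem_iUnion, Set.mem_preimage, Set.mem_setOf_eq]
    intro n
    refine ⟨n, le_rfl, ?_⟩
    exact (hy 0 n (Nat.zero_le n)).2 (by simpa using h0)
  have hdisj : ∀ᵐ y ∂μ, y ∉ tP ∩ tN := by
    filter_upwards [hprop2] with y hy
    rintro ⟨hyP, hyN⟩
    simp only [htPdef, Set.mem_iInter, Set.mem_iUnion, Set.mem_preimage,
      Set.mem_setOf_eq] at hyP
    simp only [htNdef, Set.mem_iInter, Set.mem_iUnion, Set.mem_preimage,
      Set.mem_setOf_eq] at hyN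
    obtain ⟨k, _, hk⟩ := hyP 0
    obtain ⟨m, hkm, hm⟩ := hyN k
    have := (hy k m hkm).1 hk
    linarith
  have hfinish : φ =ᵐ[μ] 0 := by
    have hinter0 : μ (tP ∩ tN) = 0 := measure_eq_zero_iff_ae_notMem.2 hdisj
    have htPN0 : μ tP = 0 ∨ μ tN = 0 := by
      rcases h01P with h | hP1
      · exact Or.inl h
      rcases h01N with h | hN1
      · exact Or.inr h
      exfalso
      have hie := measure_union_add_inter tP (t := tN) htNmeasS (μ := μ)
      rw [hinter0, hP1, hN1, add_zero] at hie
      have hle : μ (tP ∪ tN) ≤ 1 := prob_le_one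
      rw [hie] at hle
      norm_num at hle
    rcases htPN0 with h0 | h0
    · have hae : ∀ᵐ y ∂μ, ¬ 0 < φ y := by
        filter_upwards [hPsubtP, measure_eq_zero_iff_ae_notMem.1 h0] with y h1 h2 h3
        -- h2 : y ∉ tP
        exact h2 (h1 h3)
      have hneg : 0 ≤ᵐ[μ] fun x => -φ x := by
        filter_upwards [hae] with y hy
        simp only [Pi.zero_apply, neg_nonneg]
        exact not_lt.1 hy
      have hzero : ∫ x, -φ x ∂μ = 0 := by rw [integral_neg, hφ0, neg_zero]
      have h := (integral_eq_zero_iff_of_nonneg_ae hneg hφint.neg).1 hzero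
      filter_upwards [h] with x hx
      simp only [Pi.zero_apply] at hx ⊢
      linarith [neg_eq_zero.1 hx]
    · have hae : ∀ᵐ y ∂μ, ¬ φ y < 0 := by
        filter_upwards [hNsubtN, measure_eq_zero_iff_ae_notMem.1 h0] with y h1 h2 h3
        exact h2 (h1 h3)
      have hpos : 0 ≤ᵐ[μ] φ := by
        filter_upwards [hae] with y hy
        exact not_lt.1 hy
      have h := (integral_eq_zero_iff_of_nonneg_ae hpos hφint).1 hφ0
      exact h
  have hf12 : f₁ =ᵐ[μ] f₂ := by
    filter_upwards [hfinish] with x hx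
    have : φ x = 0 := hx
    rw [hφdef] at this
    exact sub_eq_zero.1 this
  exact hf₁.trans (hf12.trans hf₂.symm)
end

section
/- Consider the potential f(x) = Σ_{n=1}^∞ x_n n^{−γ} on {−1,1}^ℕ with γ > 1. The product measure μ = ⊗μ_i with μ_i({1}) = exp(Σ_{j=1}^i j^{−γ}) / (2 cosh(Σ_{j=1}^i j^{−γ})) and μ_i({−1}) = exp(−Σ_{j=1}^i j^{−γ}) / (2 cosh(Σ_{j=1}^i j^{−γ})) satisfies L*_f(μ) = λ μ with λ = 2 cosh(ζ(γ)), where ζ(γ) = Σ_{j=1}^∞ j^{−γ}; equivalently, μ is 1/e^f-conformal with parameter 2 cosh(ζ(γ)). -/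
open MeasureTheory

/-- The symbol `true ↦ 1`, `false ↦ −1`, identifying `Bool` with `{−1, 1}`. -/
def pmVal (b : Bool) : ℝ := if b then 1 else -1

noncomputable def wS (γ : ℝ) (i : ℕ) : ℝ := ∑ j ∈ Finset.range (i+1), ((j:ℝ)+1) ^ (-γ)

noncomputable def pw (γ : ℝ) (i : ℕ) (b : Bool) : ℝ :=
  Real.exp (pmVal b * wS γ i) / (2 * Real.cosh (wS γ i))

def extFin (n : ℕ) (a : Fin n → Bool) : ℕ → Bool :=
  fun i => if h : i < n then a ⟨i, h⟩ else false

lemma pw_pos (γ : ℝ) (i : ℕ) (b : Bool) : 0 < pw γ i b :=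
  div_pos (Real.exp_pos _) (by positivity)

lemma pmVal_abs (b : Bool) : |pmVal b| = 1 := by cases b <;> simp [pmVal]

lemma cylinder_measurable (n : ℕ) (a : ℕ → Bool) :
    MeasurableSet {x : ℕ → Bool | ∀ i < n, x i = a i} := by
  have : {x : ℕ → Bool | ∀ i < n, x i = a i} = ⋂ i ∈ Set.Iio n, {x : ℕ → Bool | x i = a i} := by
    ext x; simp [Set.mem_iInter]
  rw [this]
  apply MeasurableSet.biInter (Set.to_countable _)
  intro i _
  have : {x : ℕ → Bool | x i = a i} = (fun x : ℕ → Bool => x i) ⁻¹' {a i} := rfl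
  rw [this]
  exact measurable_pi_apply i (measurableSet_singleton (a i))

/-- Lemma A: integral of a function depending on finitely many coordinates. -/
lemma integral_locally_const {γ : ℝ} (μ : Measure (ℕ → Bool)) [IsProbabilityMeasure μ]
    (hcyl : ∀ (n : ℕ) (a : ℕ → Bool),
      μ {x : ℕ → Bool | ∀ i < n, x i = a i} =
        ∏ i ∈ Finset.range n, ENNReal.ofReal (pw γ i (a i)))
    (n : ℕ) (h : (ℕ → Bool) → ℝ)
    (hdep : ∀ x y : ℕ → Bool, (∀ i < n, x i = y i) → h x = h y) :
    ∫ x, h x ∂μ = ∑ a : Fin n → Bool, h (extFin n a) * ∏ i ∈ Finset.range n, pw γ i (extFin n a i) := by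
  classical
  have hrepr : ∀ x : ℕ → Bool,
      h x = ∑ a : Fin n → Bool,
        Set.indicator {y : ℕ → Bool | ∀ i < n, y i = extFin n a i} (fun _ => h (extFin n a)) x := by
    intro x
    have hx : ∀ a : Fin n → Bool,
        (x ∈ {y : ℕ → Bool | ∀ i < n, y i = extFin n a i}) ↔ a = fun i : Fin n => x i := by
      intro a
      constructor
      · intro hmem
        funext i
        have := hmem i.1 i.2
        simp [extFin, i.2] at this
        simpa using this.symm
      · rintro rfl
        intro i hi
        simp [extFin, hi]
    have h1 : ∀ a : Fin n → Bool,
        Set.indicator {y : ℕ → Bool | ∀ i < n, y i = extFin n a i} (fun _ => h (extFin n a)) x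
          = if a = (fun i : Fin n => x i) then h (extFin n a) else 0 := by
      intro a
      by_cases hc : a = fun i : Fin n => x i
      · rw [if_pos hc, Set.indicator_of_mem ((hx a).2 hc)]
      · rw [if_neg hc, Set.indicator_of_notMem (fun hm => hc ((hx a).1 hm))]
    rw [Finset.sum_congr rfl (fun a _ => h1 a),
      Finset.sum_ite_eq' Finset.univ (fun i : Fin n => x i) (fun a => h (extFin n a))]
    simp only [Finset.mem_univ, if_true]
    apply hdep
    intro i hi
    simp [extFin, hi]
  calc ∫ x, h x ∂μ = ∫ x, (∑ a : Fin n → Bool,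
        Set.indicator {y : ℕ → Bool | ∀ i < n, y i = extFin n a i} (fun _ => h (extFin n a)) x) ∂μ := by
        exact integral_congr_ae (Filter.Eventually.of_forall hrepr)
    _ = ∑ a : Fin n → Bool, ∫ x,
        Set.indicator {y : ℕ → Bool | ∀ i < n, y i = extFin n a i} (fun _ => h (extFin n a)) x ∂μ := by
        apply integral_finset_sum
        intro a _
        exact (integrable_const _).indicator (cylinder_measurable n (extFin n a))
    _ = ∑ a : Fin n → Bool, h (extFin n a) * ∏ i ∈ Finset.range n, pw γ i (extFin n a i) := by
        apply Finset.sum_congr rfl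
        intro a _
        rw [integral_indicator_const _ (cylinder_measurable n (extFin n a)), measureReal_def, hcyl]
        rw [ENNReal.toReal_prod]
        rw [smul_eq_mul, mul_comm]
        congr 1
        apply Finset.prod_congr rfl
        intro i _
        exact ENNReal.toReal_ofReal (pw_pos γ i _).le

noncomputable def FM (γ : ℝ) (M : ℕ) (x : ℕ → Bool) : ℝ :=
  ∑ n ∈ Finset.range M, pmVal (x n) * ((n:ℝ)+1) ^ (-γ)

lemma wS_succ (γ : ℝ) (i : ℕ) : wS γ (i+1) = wS γ i + (((i:ℝ)+1)+1) ^ (-γ) := by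
  unfold wS
  rw [Finset.sum_range_succ]
  congr 2
  push_cast
  ring

lemma factor_gen (v s c : ℝ) :
    Real.exp (v*c) * (Real.exp (v*s) / (2*Real.cosh s))
      = (Real.cosh (s+c) / Real.cosh s) * (Real.exp (v*(s+c)) / (2*Real.cosh (s+c))) := by
  have h0 : Real.cosh s ≠ 0 := (Real.cosh_pos s).ne'
  have h1 : Real.cosh (s+c) ≠ 0 := (Real.cosh_pos (s+c)).ne'
  have hv : v*(s+c) = v*c + v*s := by ring
  rw [hv, Real.exp_add]
  field_simp

lemma factor (γ : ℝ) (i : ℕ) (b : Bool) :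
    Real.exp (pmVal b * (((i:ℝ)+1)+1) ^ (-γ)) * pw γ i b
      = (Real.cosh (wS γ (i+1)) / Real.cosh (wS γ i)) * pw γ (i+1) b := by
  unfold pw
  rw [wS_succ]
  exact factor_gen (pmVal b) (wS γ i) ((((i:ℝ)+1)+1) ^ (-γ))

lemma tele (γ : ℝ) (K : ℕ) :
    ∏ i ∈ Finset.range K, (Real.cosh (wS γ (i+1)) / Real.cosh (wS γ i))
      = Real.cosh (wS γ K) / Real.cosh (wS γ 0) := by
  induction K with
  | zero => simp [div_self (Real.cosh_pos (wS γ 0)).ne']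
  | succ K ih =>
      have h0 : Real.cosh (wS γ 0) ≠ 0 := (Real.cosh_pos _).ne'
      have hK : Real.cosh (wS γ K) ≠ 0 := (Real.cosh_pos _).ne'
      rw [Finset.prod_range_succ, ih]
      field_simp

lemma perterm (γ : ℝ) (K : ℕ) (a : Bool) (b : Fin K → Bool) :
    Real.exp (FM γ (K+1) (consSeq a (extFin K b))) * ∏ i ∈ Finset.range K, pw γ i (extFin K b i)
      = 2 * Real.cosh (wS γ K) *
          (pw γ 0 a * ∏ i ∈ Finset.range K, pw γ (i+1) (extFin K b i)) := by
  have hsum : FM γ (K+1) (consSeq a (extFin K b))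
      = (∑ n ∈ Finset.range K, pmVal (extFin K b n) * (((n:ℝ)+1)+1) ^ (-γ))
        + pmVal a * ((0:ℝ)+1) ^ (-γ) := by
    unfold FM
    rw [Finset.sum_range_succ']
    congr 1
    · apply Finset.sum_congr rfl
      intro n _
      have h1 : consSeq a (extFin K b) (n+1) = extFin K b n := rfl
      rw [h1]
      push_cast
      ring_nf
    · have h0 : consSeq a (extFin K b) 0 = a := rfl
      rw [h0]
      norm_num
  rw [hsum, Real.exp_add, Real.exp_sum]
  rw [mul_comm (∏ n ∈ Finset.range K, Real.exp _) (Real.exp _), mul_assoc,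
    ← Finset.prod_mul_distrib]
  have hfac : ∀ n ∈ Finset.range K,
      Real.exp (pmVal (extFin K b n) * (((n:ℝ)+1)+1) ^ (-γ)) * pw γ n (extFin K b n)
        = (Real.cosh (wS γ (n+1)) / Real.cosh (wS γ n)) * pw γ (n+1) (extFin K b n) :=
    fun n _ => factor γ n (extFin K b n)
  rw [Finset.prod_congr rfl hfac, Finset.prod_mul_distrib, tele]
  have hw0 : wS γ 0 = ((0:ℝ)+1) ^ (-γ) := by simp [wS]
  have h0 : Real.cosh (wS γ 0) ≠ 0 := (Real.cosh_pos _).ne'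
  rw [← hw0]
  unfold pw
  field_simp

lemma step1 {γ : ℝ} (μ : Measure (ℕ → Bool)) [IsProbabilityMeasure μ]
    (hcyl : ∀ (n : ℕ) (a : ℕ → Bool),
      μ {x : ℕ → Bool | ∀ i < n, x i = a i} =
        ∏ i ∈ Finset.range n, ENNReal.ofReal (pw γ i (a i)))
    (ψ : (ℕ → Bool) → ℝ) (N K : ℕ) (hNK : N ≤ K + 1)
    (hdep : ∀ x y : ℕ → Bool, (∀ i < N, x i = y i) → ψ x = ψ y) :
    ∫ x, (∑ a : Bool, ψ (consSeq a x) * Real.exp (FM γ (K+1) (consSeq a x))) ∂μ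
      = 2 * Real.cosh (wS γ K) * ∫ x, ψ x ∂μ := by
  classical
  have hdepL : ∀ x y : ℕ → Bool, (∀ i < K, x i = y i) →
      (∑ a : Bool, ψ (consSeq a x) * Real.exp (FM γ (K+1) (consSeq a x)))
        = ∑ a : Bool, ψ (consSeq a y) * Real.exp (FM γ (K+1) (consSeq a y)) := by
    intro x y hxy
    apply Finset.sum_congr rfl
    intro a _
    have hagree : ∀ i < K + 1, consSeq a x i = consSeq a y i := by
      intro i hi
      cases i with
      | zero => rfl
      | succ j => exact hxy j (Nat.lt_of_succ_lt_succ hi)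
    congr 1
    · exact hdep _ _ (fun i hi => hagree i (lt_of_lt_of_le hi hNK))
    · congr 1
      unfold FM
      apply Finset.sum_congr rfl
      intro n hn
      rw [hagree n (Finset.mem_range.mp hn)]
  have hdepR : ∀ x y : ℕ → Bool, (∀ i < K + 1, x i = y i) → ψ x = ψ y :=
    fun x y hxy => hdep x y (fun i hi => hxy i (lt_of_lt_of_le hi hNK))
  rw [integral_locally_const μ hcyl K _ hdepL,
      integral_locally_const μ hcyl (K+1) ψ hdepR]
  have hcons : ∀ (a : Bool) (b : Fin K → Bool),
      extFin (K+1) (Fin.cons a b) = consSeq a (extFin K b) := by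
    intro a b
    funext i
    cases i with
    | zero => simp [extFin, consSeq]
    | succ j =>
        show (if h : j+1 < K+1 then (Fin.cons a b : Fin (K+1) → Bool) ⟨j+1, h⟩ else false)
            = extFin K b j
        by_cases hj : j < K
        · rw [dif_pos (Nat.succ_lt_succ hj)]
          have h2 : (⟨j+1, Nat.succ_lt_succ hj⟩ : Fin (K+1)) = (⟨j, hj⟩ : Fin K).succ := rfl
          rw [h2, Fin.cons_succ]
          simp [extFin, hj]
        · rw [dif_neg (by omega)]
          simp [extFin, hj]
  have hR : ∑ u : Fin (K+1) → Bool,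
        ψ (extFin (K+1) u) * ∏ i ∈ Finset.range (K+1), pw γ i (extFin (K+1) u i)
      = ∑ p : Bool × (Fin K → Bool),
        ψ (consSeq p.1 (extFin K p.2)) *
          (pw γ 0 p.1 * ∏ i ∈ Finset.range K, pw γ (i+1) (extFin K p.2 i)) := by
    refine (Fintype.sum_equiv (Fin.consEquiv (fun _ : Fin (K+1) => Bool)) _ _ ?_).symm
    intro p
    obtain ⟨a, b⟩ := p
    have he : (Fin.consEquiv (fun _ : Fin (K+1) => Bool)) (a, b) = Fin.cons a b := rfl
    rw [he, hcons a b]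
    congr 1
    rw [Finset.prod_range_succ', mul_comm]
    rfl
  calc ∑ b : Fin K → Bool,
        (∑ a : Bool, ψ (consSeq a (extFin K b)) * Real.exp (FM γ (K+1) (consSeq a (extFin K b)))) *
          ∏ i ∈ Finset.range K, pw γ i (extFin K b i)
      = ∑ b : Fin K → Bool, ∑ a : Bool,
          ψ (consSeq a (extFin K b)) *
            (2 * Real.cosh (wS γ K) *
              (pw γ 0 a * ∏ i ∈ Finset.range K, pw γ (i+1) (extFin K b i))) := by
        refine Finset.sum_congr rfl fun b _ => ?_
        rw [Finset.sum_mul]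
        refine Finset.sum_congr rfl fun a _ => ?_
        rw [mul_assoc, perterm γ K a b]
    _ = 2 * Real.cosh (wS γ K) * ∑ p : Bool × (Fin K → Bool),
          ψ (consSeq p.1 (extFin K p.2)) *
            (pw γ 0 p.1 * ∏ i ∈ Finset.range K, pw γ (i+1) (extFin K p.2 i)) := by
        rw [Fintype.sum_prod_type, Finset.mul_sum, Finset.sum_comm]
        refine Finset.sum_congr rfl fun a _ => ?_
        rw [Finset.mul_sum]
        refine Finset.sum_congr rfl fun b _ => ?_
        ring
    _ = 2 * Real.cosh (wS γ K) * ∑ u : Fin (K+1) → Bool,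
          ψ (extFin (K+1) u) * ∏ i ∈ Finset.range (K+1), pw γ i (extFin (K+1) u i) := by
        rw [hR]

section analytic
open Filter

lemma summable_pow {γ : ℝ} (hγ : 1 < γ) : Summable (fun n : ℕ => ((n:ℝ)+1) ^ (-γ)) := by
  have h1 : Summable (fun n : ℕ => (n:ℝ) ^ (-γ)) :=
    Real.summable_nat_rpow.mpr (by linarith)
  have h2 := (summable_nat_add_iff 1).mpr h1
  refine h2.congr fun n => ?_
  push_cast
  rfl

lemma continuous_consSeq (a : Bool) : Continuous (fun x : ℕ → Bool => consSeq a x) := by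
  apply continuous_pi
  intro n
  cases n with
  | zero => exact continuous_const
  | succ m => exact continuous_apply m

lemma continuous_FM (γ : ℝ) (M : ℕ) : Continuous (FM γ M) := by
  apply continuous_finset_sum
  intro n _
  have h1 : Continuous (fun x : ℕ → Bool => pmVal (x n)) :=
    Continuous.comp (continuous_of_discreteTopology (f := pmVal)) (continuous_apply n)
  exact h1.mul continuous_const

lemma FM_eq_partial (γ : ℝ) (M : ℕ) (x : ℕ → Bool) :
    FM γ M x = ∑ n ∈ Finset.range M, pmVal (x n) / ((n:ℝ)+1) ^ γ := by
  apply Finset.sum_congr rfl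
  intro n _
  rw [Real.rpow_neg (by positivity), div_eq_mul_inv]

lemma abs_term (x : ℕ → Bool) (γ : ℝ) (n : ℕ) :
    |pmVal (x n) / ((n:ℝ)+1) ^ γ| = ((n:ℝ)+1) ^ (-γ) := by
  rw [abs_div, pmVal_abs, abs_of_pos (Real.rpow_pos_of_pos (by positivity) γ),
    Real.rpow_neg (by positivity), one_div]

lemma tendsto_FM {γ : ℝ} {f : (ℕ → Bool) → ℝ}
    (hf : ∀ x : ℕ → Bool, HasSum (fun n => pmVal (x n) / ((n : ℝ) + 1) ^ γ) (f x))
    (x : ℕ → Bool) : Tendsto (fun M => FM γ M x) atTop (nhds (f x)) := by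
  have h := (hf x).tendsto_sum_nat
  exact h.congr fun M => (FM_eq_partial γ M x).symm

lemma measurable_f {γ : ℝ} {f : (ℕ → Bool) → ℝ}
    (hf : ∀ x : ℕ → Bool, HasSum (fun n => pmVal (x n) / ((n : ℝ) + 1) ^ γ) (f x)) :
    Measurable f := by
  apply measurable_of_tendsto_metrizable (f := fun M => FM γ M)
  · exact fun M => (continuous_FM γ M).measurable
  · exact tendsto_pi_nhds.mpr (tendsto_FM hf)

lemma abs_f_le {γ : ℝ} (hγ : 1 < γ) {f : (ℕ → Bool) → ℝ}
    (hf : ∀ x : ℕ → Bool, HasSum (fun n => pmVal (x n) / ((n : ℝ) + 1) ^ γ) (f x))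
    (x : ℕ → Bool) : |f x| ≤ ∑' n : ℕ, ((n:ℝ)+1) ^ (-γ) := by
  have hs := summable_pow hγ
  have habs : ∀ n : ℕ, |pmVal (x n) / ((n:ℝ)+1) ^ γ| ≤ ((n:ℝ)+1) ^ (-γ) :=
    fun n => le_of_eq (abs_term x γ n)
  rw [abs_le]
  constructor
  · have := hasSum_le (f := fun n : ℕ => -(((n:ℝ)+1) ^ (-γ)))
      (g := fun n => pmVal (x n) / ((n:ℝ)+1) ^ γ)
      (fun n => (abs_le.mp (habs n)).1) hs.hasSum.neg (hf x)
    simpa using this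
  · exact hasSum_le (fun n => (abs_le.mp (habs n)).2) (hf x) hs.hasSum

lemma abs_FM_le {γ : ℝ} (hγ : 1 < γ) (M : ℕ) (x : ℕ → Bool) :
    |FM γ M x| ≤ ∑' n : ℕ, ((n:ℝ)+1) ^ (-γ) := by
  rw [FM_eq_partial]
  calc |∑ n ∈ Finset.range M, pmVal (x n) / ((n:ℝ)+1) ^ γ|
      ≤ ∑ n ∈ Finset.range M, |pmVal (x n) / ((n:ℝ)+1) ^ γ| :=
        Finset.abs_sum_le_sum_abs _ _
    _ = ∑ n ∈ Finset.range M, ((n:ℝ)+1) ^ (-γ) :=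
        Finset.sum_congr rfl fun n _ => abs_term x γ n
    _ ≤ ∑' n : ℕ, ((n:ℝ)+1) ^ (-γ) :=
        Summable.sum_le_tsum _ (fun n _ => by positivity) (summable_pow hγ)

lemma tendsto_wS {γ : ℝ} (hγ : 1 < γ) :
    Tendsto (fun K => wS γ K) atTop (nhds (∑' n : ℕ, ((n:ℝ)+1) ^ (-γ))) := by
  have h := (summable_pow hγ).hasSum.tendsto_sum_nat
  exact h.comp (tendsto_add_atTop_nat 1)

end analytic

open Filter in
lemma step2 {γ : ℝ} (hγ : 1 < γ) (μ : Measure (ℕ → Bool)) [IsProbabilityMeasure μ]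
    (hcyl : ∀ (n : ℕ) (a : ℕ → Bool),
      μ {x : ℕ → Bool | ∀ i < n, x i = a i} =
        ∏ i ∈ Finset.range n, ENNReal.ofReal (pw γ i (a i)))
    {f : (ℕ → Bool) → ℝ}
    (hf : ∀ x : ℕ → Bool, HasSum (fun n => pmVal (x n) / ((n : ℝ) + 1) ^ γ) (f x))
    (ψ : (ℕ → Bool) → ℝ) (N : ℕ)
    (hdep : ∀ x y : ℕ → Bool, (∀ i < N, x i = y i) → ψ x = ψ y)
    (hmeas : Measurable ψ) (C : ℝ) (hbdd : ∀ x, |ψ x| ≤ C) :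
    ∫ x, (∑ a : Bool, ψ (consSeq a x) * Real.exp (f (consSeq a x))) ∂μ
      = 2 * Real.cosh (∑' n : ℕ, ((n:ℝ)+1) ^ (-γ)) * ∫ x, ψ x ∂μ := by
  set Z : ℝ := ∑' n : ℕ, ((n:ℝ)+1) ^ (-γ) with hZdef
  have hC0 : 0 ≤ C := le_trans (abs_nonneg _) (hbdd (fun _ => false))
  have hmeasK : ∀ K : ℕ, AEStronglyMeasurable
      (fun x => ∑ a : Bool, ψ (consSeq a x) * Real.exp (FM γ (K+1) (consSeq a x))) μ := by
    intro K
    apply Measurable.aestronglyMeasurable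
    apply Finset.measurable_sum
    intro a _
    exact (hmeas.comp (continuous_consSeq a).measurable).mul
      (((Real.continuous_exp.comp (continuous_FM γ (K+1))).measurable).comp
        (continuous_consSeq a).measurable)
  have hbound : ∀ (K : ℕ) (x : ℕ → Bool),
      ‖∑ a : Bool, ψ (consSeq a x) * Real.exp (FM γ (K+1) (consSeq a x))‖
        ≤ 2 * (C * Real.exp Z) := by
    intro K x
    rw [Real.norm_eq_abs]
    calc |∑ a : Bool, ψ (consSeq a x) * Real.exp (FM γ (K+1) (consSeq a x))|
        ≤ ∑ a : Bool, |ψ (consSeq a x) * Real.exp (FM γ (K+1) (consSeq a x))| :=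
          Finset.abs_sum_le_sum_abs _ _
      _ ≤ ∑ _a : Bool, C * Real.exp Z := by
          apply Finset.sum_le_sum
          intro a _
          rw [abs_mul, abs_of_pos (Real.exp_pos _)]
          have h1 : Real.exp (FM γ (K+1) (consSeq a x)) ≤ Real.exp Z :=
            Real.exp_le_exp.mpr (le_trans (le_abs_self _) (abs_FM_le hγ _ _))
          exact mul_le_mul (hbdd _) h1 (Real.exp_pos _).le hC0
      _ = 2 * (C * Real.exp Z) := by
          rw [Finset.sum_const, Finset.card_univ]
          simp [two_smul]
          ring
  have hlim : ∀ x : ℕ → Bool,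
      Tendsto (fun K => ∑ a : Bool, ψ (consSeq a x) * Real.exp (FM γ (K+1) (consSeq a x)))
        atTop (nhds (∑ a : Bool, ψ (consSeq a x) * Real.exp (f (consSeq a x)))) := by
    intro x
    apply tendsto_finset_sum
    intro a _
    exact Tendsto.const_mul _
      ((Real.continuous_exp.tendsto (f (consSeq a x))).comp
        ((tendsto_FM hf (consSeq a x)).comp (tendsto_add_atTop_nat 1)))
  have hDCT := tendsto_integral_of_dominated_convergence
    (F := fun K x => ∑ a : Bool, ψ (consSeq a x) * Real.exp (FM γ (K+1) (consSeq a x)))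
    (bound := fun _ => 2 * (C * Real.exp Z)) hmeasK (integrable_const _)
    (fun K => Eventually.of_forall (hbound K)) (Eventually.of_forall hlim)
  have heq : ∀ᶠ K in atTop,
      (∫ x, ∑ a : Bool, ψ (consSeq a x) * Real.exp (FM γ (K+1) (consSeq a x)) ∂μ)
        = 2 * Real.cosh (wS γ K) * ∫ x, ψ x ∂μ := by
    filter_upwards [eventually_ge_atTop N] with K hK
    exact step1 μ hcyl ψ N K (by omega) hdep
  have h3 : Tendsto (fun K => 2 * Real.cosh (wS γ K) * ∫ x, ψ x ∂μ) atTop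
      (nhds (2 * Real.cosh Z * ∫ x, ψ x ∂μ)) := by
    apply Tendsto.mul_const
    exact Tendsto.const_mul _ ((Real.continuous_cosh.tendsto Z).comp (tendsto_wS hγ))
  exact tendsto_nhds_unique (hDCT.congr' heq) h3

def truncN (N : ℕ) (x : ℕ → Bool) : ℕ → Bool := fun i => if i < N then x i else false

lemma continuous_truncN (N : ℕ) : Continuous (truncN N) := by
  apply continuous_pi
  intro i
  by_cases h : i < N
  · have : (fun x : ℕ → Bool => truncN N x i) = fun x => x i := by
      funext x; simp [truncN, h]
    rw [this]; exact continuous_apply i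
  · have : (fun x : ℕ → Bool => truncN N x i) = fun _ => false := by
      funext x; simp [truncN, h]
    rw [this]; exact continuous_const


open Filter in
/-- For `f(x) = ∑_n x_n n^{−γ}` on `{−1,1}^ℕ`, `γ > 1`, the product
measure with weights `μ_i(±1) = exp(± ∑_{j≤i} j^{−γ}) / (2 cosh(∑_{j≤i} j^{−γ}))`
satisfies `L_f^* μ = λ μ` with `λ = 2 cosh(ζ(γ))`, expressed by duality against
continuous test functions. -/
theorem stmt_18 (γ : ℝ) (hγ : 1 < γ)
    (μ : Measure (ℕ → Bool)) (hμ : IsProbabilityMeasure μ)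
    (hcyl : ∀ (n : ℕ) (a : ℕ → Bool),
      μ {x : ℕ → Bool | ∀ i < n, x i = a i} =
        ∏ i ∈ Finset.range n, ENNReal.ofReal
          (Real.exp (pmVal (a i) * ∑ j ∈ Finset.range (i + 1), ((j : ℝ) + 1) ^ (-γ)) /
            (2 * Real.cosh (∑ j ∈ Finset.range (i + 1), ((j : ℝ) + 1) ^ (-γ)))))
    (f : (ℕ → Bool) → ℝ)
    (hf : ∀ x : ℕ → Bool, HasSum (fun n => pmVal (x n) / ((n : ℝ) + 1) ^ γ) (f x)) :
    ∀ φ : (ℕ → Bool) → ℝ, Continuous φ →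
      ∫ x, (∑ a : Bool, φ (consSeq a x) * Real.exp (f (consSeq a x))) ∂μ =
        (2 * Real.cosh (∑' j : ℕ, ((j : ℝ) + 1) ^ (-γ))) * ∫ x, φ x ∂μ := by
  intro φ hφ
  haveI := hμ
  set Z : ℝ := ∑' j : ℕ, ((j:ℝ)+1) ^ (-γ) with hZdef
  have hcyl' : ∀ (n : ℕ) (a : ℕ → Bool),
      μ {x : ℕ → Bool | ∀ i < n, x i = a i} =
        ∏ i ∈ Finset.range n, ENNReal.ofReal (pw γ i (a i)) := hcyl
  obtain ⟨x₀, -, hx₀⟩ := isCompact_univ.exists_isMaxOn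
    (Set.univ_nonempty (α := ℕ → Bool)) ((continuous_abs.comp hφ).continuousOn)
  set C : ℝ := |φ x₀| with hCdef
  have hC : ∀ x, |φ x| ≤ C := fun x => hx₀ (Set.mem_univ x)
  have hC0 : 0 ≤ C := le_trans (abs_nonneg _) (hC (fun _ => false))
  have hdepN : ∀ (N : ℕ) (x y : ℕ → Bool), (∀ i < N, x i = y i) →
      φ (truncN N x) = φ (truncN N y) := by
    intro N x y hxy
    congr 1
    funext i
    by_cases h : i < N
    · simp [truncN, h, hxy i h]
    · simp [truncN, h]
  have hmeasN : ∀ N : ℕ, Measurable (fun x => φ (truncN N x)) :=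
    fun N => hφ.measurable.comp (continuous_truncN N).measurable
  have hE : ∀ N : ℕ,
      ∫ x, (∑ a : Bool, φ (truncN N (consSeq a x)) * Real.exp (f (consSeq a x))) ∂μ
        = 2 * Real.cosh Z * ∫ x, φ (truncN N x) ∂μ :=
    fun N => step2 hγ μ hcyl' hf (fun x => φ (truncN N x)) N (hdepN N) (hmeasN N) C
      (fun x => hC _)
  -- limits N → ∞
  have htrunc : ∀ x : ℕ → Bool, Tendsto (fun N => truncN N x) atTop (nhds x) := by
    intro x
    rw [tendsto_pi_nhds]
    intro i
    apply tendsto_const_nhds.congr'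
    filter_upwards [eventually_gt_atTop i] with N hN
    simp [truncN, hN]
  have hφlim : ∀ x, Tendsto (fun N => φ (truncN N x)) atTop (nhds (φ x)) :=
    fun x => ((hφ.tendsto x).comp (htrunc x))
  have hmf : Measurable f := measurable_f hf
  have hDCT1 : Tendsto (fun N => ∫ x, φ (truncN N x) ∂μ) atTop (nhds (∫ x, φ x ∂μ)) := by
    apply tendsto_integral_of_dominated_convergence (bound := fun _ => C)
    · exact fun N => (hmeasN N).aestronglyMeasurable
    · exact integrable_const _
    · exact fun N => Eventually.of_forall (fun x => by
        rw [Real.norm_eq_abs]; exact hC _)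
    · exact Eventually.of_forall hφlim
  have hDCT2 : Tendsto
      (fun N => ∫ x, (∑ a : Bool, φ (truncN N (consSeq a x)) * Real.exp (f (consSeq a x))) ∂μ)
      atTop
      (nhds (∫ x, (∑ a : Bool, φ (consSeq a x) * Real.exp (f (consSeq a x))) ∂μ)) := by
    apply tendsto_integral_of_dominated_convergence (bound := fun _ => 2 * (C * Real.exp Z))
    · intro N
      apply Measurable.aestronglyMeasurable
      apply Finset.measurable_sum
      intro a _
      exact ((hmeasN N).comp (continuous_consSeq a).measurable).mul
        ((Real.measurable_exp.comp hmf).comp (continuous_consSeq a).measurable)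
    · exact integrable_const _
    · intro N
      apply Eventually.of_forall
      intro x
      rw [Real.norm_eq_abs]
      calc |∑ a : Bool, φ (truncN N (consSeq a x)) * Real.exp (f (consSeq a x))|
          ≤ ∑ a : Bool, |φ (truncN N (consSeq a x)) * Real.exp (f (consSeq a x))| :=
            Finset.abs_sum_le_sum_abs _ _
        _ ≤ ∑ _a : Bool, C * Real.exp Z := by
            apply Finset.sum_le_sum
            intro a _
            rw [abs_mul, abs_of_pos (Real.exp_pos _)]
            have h1 : Real.exp (f (consSeq a x)) ≤ Real.exp Z :=
              Real.exp_le_exp.mpr (le_trans (le_abs_self _) (abs_f_le hγ hf _))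
            exact mul_le_mul (hC _) h1 (Real.exp_pos _).le hC0
        _ = 2 * (C * Real.exp Z) := by
            rw [Finset.sum_const, Finset.card_univ]
            simp [two_smul]
            ring
    · apply Eventually.of_forall
      intro x
      apply tendsto_finset_sum
      intro a _
      exact Tendsto.mul_const _ (hφlim (consSeq a x))
  have h3 : Tendsto (fun N => 2 * Real.cosh Z * ∫ x, φ (truncN N x) ∂μ) atTop
      (nhds (2 * Real.cosh Z * ∫ x, φ x ∂μ)) := hDCT1.const_mul _
  have h4 : Tendsto
      (fun N => ∫ x, (∑ a : Bool, φ (truncN N (consSeq a x)) * Real.exp (f (consSeq a x))) ∂μ)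
      atTop (nhds (2 * Real.cosh Z * ∫ x, φ x ∂μ)) :=
    h3.congr fun N => (hE N).symm
  exact tendsto_nhds_unique hDCT2 h4
end
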